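/- arXiv:1404.1353 — 9 statements merged into one kernel-verified Lean document; each statement's English description precedes it below -/
import Mathlib

section
/- For every real number q with 1 < q ≤ 2, the function F(x) = x²/(1+x)^{2-q} is convex on the interval (-1, +∞). -/
open Set Real

private lemma hasDerivAt_shift_rpow (r : ℝ) {x : ℝ} (hx : (-1:ℝ) < x) :
    HasDerivAt (fun x : ℝ => (1 + x) ^ r) (r * (1 + x) ^ (r - 1)) x := by
  have h1 : HasDerivAt (fun x : ℝ => 1 + x) 1 x := (hasDerivAt_id x).const_add 1
  have h2 : HasDerivAt (fun y : ℝ => y ^ r) (r * (1 + x) ^ (r - 1)) (1 + x) :=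
    Real.hasDerivAt_rpow_const (Or.inl (by linarith))
  simpa [Function.comp_def] using h2.comp x h1

theorem stmt2 (q : ℝ) (hq : 1 < q) (hq2 : q ≤ 2) :
    ConvexOn ℝ (Set.Ioi (-1 : ℝ)) (fun x : ℝ => x ^ 2 * (1 + x) ^ (q - 2)) := by
  have hint : interior (Set.Ioi (-1:ℝ)) = Set.Ioi (-1:ℝ) := interior_Ioi
  refine convexOn_of_hasDerivWithinAt2_nonneg (f' := fun x =>
      (2:ℝ) * x ^ 1 * (1 + x) ^ (q - 2) + x ^ 2 * ((q - 2) * (1 + x) ^ (q - 3)))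
    (f'' := fun x => ((2:ℝ) * (1 + x) ^ (q - 2) + 2 * x * ((q - 2) * (1 + x) ^ (q - 3)))
      + (q - 2) * (2 * x ^ 1 * (1 + x) ^ (q - 3) + x ^ 2 * ((q - 3) * (1 + x) ^ (q - 4))))
    (convex_Ioi _) ?_ ?_ ?_ ?_
  · exact (continuousOn_pow 2).mul ((continuousOn_const.add continuousOn_id).rpow_const
      (fun x hx => Or.inl (by simp only [Set.mem_Ioi] at hx; show (1:ℝ) + x ≠ 0; intro h; linarith)))
  · rw [hint]
    intro x hx
    simp only [Set.mem_Ioi] at hx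
    have h1 : HasDerivAt (fun x : ℝ => x ^ 2 * (1 + x) ^ (q - 2))
        ((2:ℝ) * x ^ 1 * (1 + x) ^ (q - 2) + x ^ 2 * ((q - 2) * (1 + x) ^ (q - 3))) x := by
      have := (hasDerivAt_pow 2 x).mul (by simpa using hasDerivAt_shift_rpow (q - 2) hx)
      simpa [show q - 2 - 1 = q - 3 by ring, Pi.mul_def] using this
    exact h1.hasDerivWithinAt
  · rw [hint]
    intro x hx
    simp only [Set.mem_Ioi] at hx
    have hA : HasDerivAt (fun x : ℝ => (2:ℝ) * x ^ 1 * (1 + x) ^ (q - 2))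
        ((2:ℝ) * (1 + x) ^ (q - 2) + 2 * x * ((q - 2) * (1 + x) ^ (q - 3))) x := by
      have h1 : HasDerivAt (fun x : ℝ => (2:ℝ) * x ^ 1) 2 x := by
        simpa using ((hasDerivAt_id x).const_mul (2:ℝ))
      have := h1.mul (hasDerivAt_shift_rpow (q - 2) hx)
      simpa [show q - 2 - 1 = q - 3 by ring, Pi.mul_def, pow_one, mul_comm, mul_assoc, mul_left_comm]
        using this
    have hB : HasDerivAt (fun x : ℝ => x ^ 2 * ((q - 2) * (1 + x) ^ (q - 3)))
        ((q - 2) * (2 * x ^ 1 * (1 + x) ^ (q - 3) + x ^ 2 * ((q - 3) * (1 + x) ^ (q - 4)))) x := by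
      have h2 : HasDerivAt (fun x : ℝ => x ^ 2 * (1 + x) ^ (q - 3))
          ((2:ℝ) * x ^ 1 * (1 + x) ^ (q - 3) + x ^ 2 * ((q - 3) * (1 + x) ^ (q - 4))) x := by
        have := (hasDerivAt_pow 2 x).mul (hasDerivAt_shift_rpow (q - 3) hx)
        simpa [show q - 3 - 1 = q - 4 by ring, Pi.mul_def] using this
      have := h2.const_mul (q - 2)
      convert this using 2 <;> [rfl; rfl; ring]
    exact (hA.add hB).hasDerivWithinAt
  · rw [hint]
    intro x hx
    simp only [Set.mem_Ioi] at hx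
    have ht : (0:ℝ) < 1 + x := by linarith
    have e2 : (1 + x) ^ (q - 2) = (1 + x) ^ (q - 4) * (1 + x) ^ 2 := by
      rw [show q - 2 = q - 4 + 2 by ring, Real.rpow_add ht,
        show ((2:ℝ)) = ((2:ℕ):ℝ) by norm_num, Real.rpow_natCast]
    have e3 : (1 + x) ^ (q - 3) = (1 + x) ^ (q - 4) * (1 + x) := by
      rw [show q - 3 = q - 4 + 1 by ring, Real.rpow_add ht, Real.rpow_one]
    rw [e2, e3]
    have hQ : 0 ≤ 2 * (1 + x) ^ 2 + 4 * (q - 2) * x * (1 + x) + (q - 2) * (q - 3) * x ^ 2 := by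
      nlinarith [sq_nonneg (q * x + 2), sq_nonneg x, sq_nonneg (1 + x)]
    have hp : 0 ≤ (1 + x) ^ (q - 4) := Real.rpow_nonneg ht.le _
    have := mul_nonneg hp hQ
    calc (0:ℝ) ≤ (1 + x) ^ (q - 4) *
        (2 * (1 + x) ^ 2 + 4 * (q - 2) * x * (1 + x) + (q - 2) * (q - 3) * x ^ 2) := this
      _ = 2 * ((1 + x) ^ (q - 4) * (1 + x) ^ 2) +
          2 * x * ((q - 2) * ((1 + x) ^ (q - 4) * (1 + x))) +
          (q - 2) * (2 * x ^ 1 * ((1 + x) ^ (q - 4) * (1 + x)) +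
            x ^ 2 * ((q - 3) * (1 + x) ^ (q - 4))) := by ring
end

section
/- For every real q ∈ (1,2] and every t ∈ (0,1), the function 𝓕_t(s) = s²/(1+ts)^{2-q} is convex on [-1, +∞). -/
theorem stmt3 (q t : ℝ) (hq : 1 < q) (hq2 : q ≤ 2) (ht : t ∈ Set.Ioo (0 : ℝ) 1) :
    ConvexOn ℝ (Set.Ici (-1 : ℝ)) (fun s : ℝ => s ^ 2 * (1 + t * s) ^ (q - 2)) := by
  obtain ⟨ht0, ht1⟩ := ht
  have hv : ∀ x ∈ Set.Ici (-1 : ℝ), 0 < 1 + t * x := by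
    intro x hx
    have hx' : (-1 : ℝ) ≤ x := hx
    nlinarith
  set f' : ℝ → ℝ := fun x =>
    2 * x * (1 + t * x) ^ (q - 2) + x ^ 2 * ((q - 2) * (1 + t * x) ^ (q - 3) * t) with hf'def
  set f'' : ℝ → ℝ := fun x =>
    2 * (1 + t * x) ^ (q - 2) + 2 * x * ((q - 2) * (1 + t * x) ^ (q - 3) * t)
      + (2 * x * ((q - 2) * (1 + t * x) ^ (q - 3) * t)
        + x ^ 2 * ((q - 2) * ((q - 3) * (1 + t * x) ^ (q - 4) * t) * t)) with hf''def
  have hint : interior (Set.Ici (-1 : ℝ)) = Set.Ioi (-1 : ℝ) := interior_Ici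
  refine convexOn_of_hasDerivWithinAt2_nonneg (f' := f') (f'' := f'') (convex_Ici _) ?_ ?_ ?_ ?_
  · exact (continuousOn_pow 2).mul
      (ContinuousOn.rpow_const (by fun_prop) (fun x hx => Or.inl (hv x hx).ne'))
  · intro x hx
    rw [hint] at hx ⊢
    have hvx : 0 < 1 + t * x := hv x (Set.mem_Ici.mpr (le_of_lt (Set.mem_Ioi.mp hx)))
    have hb : HasDerivAt (fun y : ℝ => 1 + t * y) t x := by
      simpa using ((hasDerivAt_id x).const_mul t).const_add 1
    have h2 : HasDerivAt (fun y : ℝ => (1 + t * y) ^ (q - 2))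
        (t * (q - 2) * (1 + t * x) ^ (q - 2 - 1)) x := hb.rpow_const (Or.inl hvx.ne')
    have h3 := (hasDerivAt_pow 2 x).fun_mul h2
    have : HasDerivAt (fun y : ℝ => y ^ 2 * (1 + t * y) ^ (q - 2)) (f' x) x := by
      refine h3.congr_deriv ?_
      simp only [hf'def]
      rw [show q - 2 - 1 = q - 3 by ring]
      push_cast
      ring
    exact this.hasDerivWithinAt
  · intro x hx
    rw [hint] at hx ⊢
    have hvx : 0 < 1 + t * x := hv x (Set.mem_Ici.mpr (le_of_lt (Set.mem_Ioi.mp hx)))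
    have hb : HasDerivAt (fun y : ℝ => 1 + t * y) t x := by
      simpa using ((hasDerivAt_id x).const_mul t).const_add 1
    have h2 : HasDerivAt (fun y : ℝ => (1 + t * y) ^ (q - 2))
        (t * (q - 2) * (1 + t * x) ^ (q - 2 - 1)) x := hb.rpow_const (Or.inl hvx.ne')
    have h3 : HasDerivAt (fun y : ℝ => (1 + t * y) ^ (q - 3))
        (t * (q - 3) * (1 + t * x) ^ (q - 3 - 1)) x := hb.rpow_const (Or.inl hvx.ne')
    have hA : HasDerivAt (fun y : ℝ => 2 * y * (1 + t * y) ^ (q - 2))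
        (2 * (1 + t * x) ^ (q - 2) + 2 * x * (t * (q - 2) * (1 + t * x) ^ (q - 2 - 1))) x := by
      have := (((hasDerivAt_id x).const_mul 2).fun_mul h2)
      simpa using this
    have hB : HasDerivAt (fun y : ℝ => y ^ 2 * ((q - 2) * (1 + t * y) ^ (q - 3) * t))
        (2 * x * ((q - 2) * (1 + t * x) ^ (q - 3) * t)
          + x ^ 2 * ((q - 2) * (t * (q - 3) * (1 + t * x) ^ (q - 3 - 1)) * t)) x := by
      have hc : HasDerivAt (fun y : ℝ => (q - 2) * (1 + t * y) ^ (q - 3) * t)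
          ((q - 2) * (t * (q - 3) * (1 + t * x) ^ (q - 3 - 1)) * t) x := by
        exact ((h3.const_mul (q - 2)).mul_const t)
      have := (hasDerivAt_pow 2 x).fun_mul hc
      refine this.congr_deriv ?_
      ring
    have : HasDerivAt f' (f'' x) x := by
      refine (hA.add hB).congr_deriv ?_
      simp only [hf''def]
      rw [show q - 2 - 1 = q - 3 by ring, show q - 3 - 1 = q - 4 by ring]
      ring
    exact this.hasDerivWithinAt
  · intro x hx
    rw [hint] at hx
    have hvx : 0 < 1 + t * x := hv x (Set.mem_Ici.mpr (le_of_lt (Set.mem_Ioi.mp hx)))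
    have hA : 0 < (1 + t * x) ^ (q - 4) := Real.rpow_pos_of_pos hvx _
    have e2 : (1 + t * x) ^ (q - 2) = (1 + t * x) ^ (q - 4) * (1 + t * x) ^ 2 := by
      rw [show q - 2 = q - 4 + 2 by ring, Real.rpow_add hvx, Real.rpow_two]
    have e3 : (1 + t * x) ^ (q - 3) = (1 + t * x) ^ (q - 4) * (1 + t * x) := by
      rw [show q - 3 = q - 4 + 1 by ring, Real.rpow_add hvx, Real.rpow_one]
    simp only [hf''def, e2, e3]
    nlinarith [mul_nonneg (mul_nonneg hA.le (by linarith : (0:ℝ) ≤ q - 1))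
        (sq_nonneg (q * (t * x) + 2)),
      mul_nonneg hA.le (by linarith : (0:ℝ) ≤ 2 - q), hA.le, sq_nonneg (t * x)]
end

section
/- Let A be a linear operator on a vector space and k ∈ ℕ. Then I - A = 2^{-(k+1)}·(I - A^{2^{k+1}}) + ∑_{i=0}^{k} 2^{-(i+1)}·(I - A^{2^i})², where I is the identity operator. -/
lemma key6 {R : Type*} [Ring R] [Algebra ℝ R] (B : R) :
    1 - B = (2 : ℝ)⁻¹ • (1 - B ^ 2) + (2 : ℝ)⁻¹ • (1 - B) ^ 2 := by
  rw [← smul_add]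
  have h : (1 - B ^ 2) + (1 - B) ^ 2 = (2 : ℝ) • (1 - B) := by
    rw [two_smul]; noncomm_ring
  rw [h, smul_smul]
  norm_num

theorem stmt6 {R : Type*} [Ring R] [Algebra ℝ R] (A : R) (k : ℕ) :
    1 - A = ((2 : ℝ) ^ (k + 1))⁻¹ • (1 - A ^ (2 ^ (k + 1))) +
      ∑ i ∈ Finset.range (k + 1), ((2 : ℝ) ^ (i + 1))⁻¹ • (1 - A ^ (2 ^ i)) ^ 2 := by
  induction k with
  | zero =>
      simpa using key6 A
  | succ k ih =>
      have hpow : (A ^ (2 ^ (k + 1))) ^ 2 = A ^ (2 ^ (k + 2)) := by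
        rw [← pow_mul]; ring_nf
      have hstep : ((2 : ℝ) ^ (k + 1))⁻¹ • (1 - A ^ (2 ^ (k + 1))) =
          ((2 : ℝ) ^ (k + 2))⁻¹ • (1 - A ^ (2 ^ (k + 2))) +
          ((2 : ℝ) ^ (k + 2))⁻¹ • (1 - A ^ (2 ^ (k + 1))) ^ 2 := by
        have hB := key6 (A ^ (2 ^ (k + 1)))
        rw [show ((2:ℝ)^(k+2))⁻¹ = ((2:ℝ)^(k+1))⁻¹ * 2⁻¹ by rw [pow_succ, mul_inv]]
        rw [← smul_smul, ← smul_smul, ← smul_add, ← hpow, ← hB]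
      rw [Finset.sum_range_succ, ih, hstep]
      abel
end

section
/- Let β > 0 and η be the unique integer with η < β ≤ η + 1, and let (a_k)_{k≥0} be the (nonnegative) Taylor coefficients of (1-z)^{β-η-1}, i.e. ∑ a_k z^k = (1-z)^{β-η-1} for |z|<1. Then there is a constant C > 0 such that for all m ≥ 1, ∑_{k=0}^{m-1} a_k·(m-k)^{β-η-1} ≤ C. -/
open FormalMultilinearSeries

lemma aux_coeff (c : ℕ → ℝ) (n : ℕ) : (ofScalars ℝ c).coeff n = c n := by
  simpa using FormalMultilinearSeries.ofScalars_apply_eq (E := ℝ) c 1 n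

lemma aux_radius (c : ℕ → ℝ) (h : ∀ z : ℝ, 0 ≤ z → z < 1 → Summable (fun k : ℕ => |c k| * z ^ k)) :
    1 ≤ (ofScalars ℝ c).radius := by
  refine ENNReal.le_of_forall_nnreal_lt (fun r hr => ?_)
  apply FormalMultilinearSeries.le_radius_of_summable
  have := h r r.coe_nonneg (by exact_mod_cast hr)
  simpa [FormalMultilinearSeries.ofScalars_norm, aux_coeff] using this

lemma aux_ball (c : ℕ → ℝ) (f : ℝ → ℝ)
    (h : ∀ z : ℝ, |z| < 1 → HasSum (fun k : ℕ => c k * z ^ k) (f z)) :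
    HasFPowerSeriesOnBall f (ofScalars ℝ c) 0 1 := by
  constructor
  · refine aux_radius c (fun z hz0 hz1 => ?_)
    have := (h z (by rwa [abs_of_nonneg hz0])).summable.abs
    refine this.congr (fun k => ?_)
    simp [abs_mul, abs_pow, abs_of_nonneg hz0]
  · exact one_pos
  · intro y hy
    have hy' : |y| < 1 := by
      simpa [enorm_eq_nnnorm, ← NNReal.coe_lt_coe, Real.norm_eq_abs] using hy
    have := h y hy'
    refine HasSum.congr_fun (by simpa using this) (fun k => ?_)
    simp [aux_coeff, mul_comm]

lemma aux_deriv (c : ℕ → ℝ) (f : ℝ → ℝ)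
    (h : ∀ z : ℝ, |z| < 1 → HasSum (fun k : ℕ => c k * z ^ k) (f z))
    {y : ℝ} (hy0 : y ≠ 0) (hy : |y| < 1) {d : ℝ} (hd : HasDerivAt f d y) :
    HasSum (fun n : ℕ => ((n : ℝ) + 1) * c (n + 1) * y ^ n) d := by
  have hb : HasFPowerSeriesWithinOnBall f (ofScalars ℝ c) Set.univ 0 1 := by
    rw [hasFPowerSeriesWithinOnBall_univ]
    exact aux_ball c f h
  have hy' : (‖y‖₊ : ENNReal) < 1 := by
    simpa [← NNReal.coe_lt_coe, Real.norm_eq_abs] using (by exact_mod_cast hy : (‖y‖₊ : ENNReal) < 1)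
  have H := hb.hasSum_derivSeries_of_hasFDerivWithinAt (f' := ContinuousLinearMap.smulRight (1 : ℝ →L[ℝ] ℝ) d)
    (y := y) hy' (by simp) (by simpa [ContinuousLinearMap.smulRight_one_eq_toSpanSingleton] using hd.hasFDerivAt) (by simp [uniqueDiffOn_univ])
  have H1 := (ContinuousLinearMap.apply ℝ ℝ (1 : ℝ)).hasSum H
  simp only [ContinuousLinearMap.apply_apply] at H1
  have H2 : ∀ n : ℕ, ((ofScalars ℝ c).derivSeries n (fun _ => y)) 1
      = ((n : ℝ) + 1) * c (n + 1) * y ^ n := by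
    intro n
    set L := ((ofScalars ℝ c).derivSeries n (fun _ => y)) 1 with hL
    have hdiag := FormalMultilinearSeries.derivSeries_apply_diag (ofScalars ℝ c) n y
    have hlin : ((ofScalars ℝ c).derivSeries n (fun _ => y)) y = y * L := by
      have := ((ofScalars ℝ c).derivSeries n (fun _ => y)).map_smul y (1 : ℝ)
      rw [smul_eq_mul, mul_one] at this
      rw [this, smul_eq_mul]
    have hval : ((n : ℕ) + 1) • (ofScalars ℝ c) (n + 1) (fun _ => y)
        = ((n : ℝ) + 1) * (c (n + 1) * y ^ (n + 1)) := by
      rw [FormalMultilinearSeries.ofScalars_apply_eq]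
      push_cast [nsmul_eq_mul, smul_eq_mul]
      ring
    have key : y * L = y * (((n : ℝ) + 1) * c (n + 1) * y ^ n) := by
      rw [← hlin, hdiag, hval]; ring
    exact mul_left_cancel₀ hy0 key
  have hd1 : (ContinuousLinearMap.smulRight (1 : ℝ →L[ℝ] ℝ) d) 1 = d := by simp
  rw [hd1] at H1
  exact H1.congr_fun (fun n => (H2 n).symm)

lemma aux_rec (γ : ℝ) (a : ℕ → ℝ)
    (ha : ∀ z : ℝ, |z| < 1 → HasSum (fun k : ℕ => a k * z ^ k) ((1 - z) ^ γ)) :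
    ∀ n : ℕ, ((n : ℝ) + 1) * a (n + 1) = ((n : ℝ) - γ) * a n := by
  set f : ℝ → ℝ := fun z => (1 - z) ^ γ with hf
  set c : ℕ → ℝ := fun n => ((n : ℝ) + 1) * a (n + 1) - ((n : ℝ) - γ) * a n with hc
  -- derivative of f
  have hd : ∀ y : ℝ, |y| < 1 → HasDerivAt f (γ * (1 - y) ^ (γ - 1) * (-1)) y := by
    intro y hy
    have h1y : (0:ℝ) < 1 - y := by
      have := abs_lt.1 hy
      linarith [this.2]
    have houter := Real.hasDerivAt_rpow_const (x := 1 - y) (p := γ) (Or.inl h1y.ne')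
    have hinner : HasDerivAt (fun z : ℝ => 1 - z) (-1) y := by
      simpa using ((hasDerivAt_id y).const_sub 1)
    exact houter.comp y hinner
  -- key hasSum of c-series equals 0 for y ≠ 0
  have hzero : ∀ y : ℝ, |y| < 1 → y ≠ 0 → HasSum (fun n : ℕ => c n * y ^ n) 0 := by
    intro y hy hy0
    have h1y : (0:ℝ) < 1 - y := by
      have := abs_lt.1 hy
      linarith [this.2]
    set D : ℝ := γ * (1 - y) ^ (γ - 1) * (-1) with hD
    have A : HasSum (fun n : ℕ => ((n : ℝ) + 1) * a (n + 1) * y ^ n) D :=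
      aux_deriv a f ha hy0 hy (hd y hy)
    have B : HasSum (fun n : ℕ => a n * y ^ n) ((1 - y) ^ γ) := ha y hy
    have B2 : HasSum (fun n : ℕ => ((n : ℝ) + 1) * a (n + 1) * y ^ (n + 1)) (y * D) := by
      have := A.mul_left y
      refine this.congr_fun (fun n => by ring)
    have B3 : HasSum (fun n : ℕ => (n : ℝ) * a n * y ^ n) (y * D) := by
      have := (hasSum_nat_add_iff (f := fun n : ℕ => (n : ℝ) * a n * y ^ n) 1).1
        (B2.congr_fun (fun n => by push_cast; ring))
      simpa using this
    have S := (A.sub B3).add (B.mul_left γ)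
    have hval : D - y * D + γ * (1 - y) ^ γ = 0 := by
      have hrw : (1 - y) ^ (γ - 1) * (1 - y) = (1 - y) ^ γ := by
        have h2 : γ - 1 + 1 = γ := by ring
        calc (1 - y) ^ (γ - 1) * (1 - y) = (1 - y) ^ (γ - 1) * (1 - y) ^ (1:ℝ) := by
              rw [Real.rpow_one]
          _ = (1 - y) ^ (γ - 1 + 1) := (Real.rpow_add h1y _ _).symm
          _ = (1 - y) ^ γ := by rw [h2]
      have : D - y * D = (1 - y) * D := by ring
      rw [this, hD]
      calc (1 - y) * (γ * (1 - y) ^ (γ - 1) * (-1)) + γ * (1 - y) ^ γ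
          = -γ * ((1 - y) ^ (γ - 1) * (1 - y)) + γ * (1 - y) ^ γ := by ring
        _ = 0 := by rw [hrw]; ring
    rw [hval] at S
    exact S.congr_fun (fun n => by simp [hc]; ring)
  -- build the function g as sum of the c-series
  set g : ℝ → ℝ := fun y => ∑' n : ℕ, c n * y ^ n with hg
  have hgsum : ∀ z : ℝ, |z| < 1 → HasSum (fun k : ℕ => c k * z ^ k) (g z) := by
    intro z hz
    rcases eq_or_ne z 0 with rfl | hz0
    · have : HasSum (fun k : ℕ => c k * (0:ℝ) ^ k) (c 0 * (0:ℝ) ^ 0) :=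
        hasSum_single 0 (fun b hb => by simp [zero_pow hb])
      simpa [hg] using this.tsum_eq ▸ this
    · have := hzero z hz hz0
      simpa [hg, this.tsum_eq] using this
  have hball := aux_ball c g hgsum
  have hev : ∀ᶠ z in nhdsWithin (0:ℝ) ({(0:ℝ)}ᶜ), g z = 0 := by
    have hmem : Set.Ioo (-1:ℝ) 1 ∈ nhds (0:ℝ) := Ioo_mem_nhds (by norm_num) (by norm_num)
    filter_upwards [eventually_nhdsWithin_of_eventually_nhds
      (Filter.eventually_of_mem hmem (fun z (hz : z ∈ Set.Ioo (-1:ℝ) 1) => hz)),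
      self_mem_nhdsWithin] with z hz hz0
    exact (hzero z (abs_lt.2 ⟨hz.1, hz.2⟩) (by simpa using hz0)).tsum_eq
  have hev0 : ∀ᶠ z in nhds (0:ℝ), g z = 0 :=
    (hball.analyticAt.frequently_zero_iff_eventually_zero).1 hev.frequently
  have hpq := hball.hasFPowerSeriesAt.eq_formalMultilinearSeries_of_eventually
    (hasFPowerSeriesAt_const (c := (0:ℝ)) (e := (0:ℝ))) hev0
  have hc0 : c = 0 := by
    rw [constFormalMultilinearSeries_zero] at hpq
    exact (FormalMultilinearSeries.ofScalars_series_eq_zero ℝ).1 hpq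
  intro n
  have := congrFun hc0 n
  simp only [hc, Pi.zero_apply] at this
  linarith

-- Bernoulli-type: (x-1)^p ≤ x^p - p * x^(p-1) for x ≥ 1, 0 ≤ p ≤ 1
lemma aux_bern {x p : ℝ} (hx : 1 ≤ x) (hp0 : 0 ≤ p) (hp1 : p ≤ 1) :
    (x - 1) ^ p ≤ x ^ p - p * x ^ (p - 1) := by
  have hx0 : 0 < x := lt_of_lt_of_le one_pos hx
  have hs : -1 ≤ -(1/x) := by
    rw [neg_le_neg_iff]
    rw [div_le_one hx0]
    exact hx
  have hb := rpow_one_add_le_one_add_mul_self hs hp0 hp1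
  -- (1 - 1/x)^p ≤ 1 - p / x
  have h1 : (1 + -(1/x)) = (x - 1) / x := by field_simp; ring
  rw [h1] at hb
  have h2 : (x - 1) ^ p = x ^ p * ((x - 1)/x) ^ p := by
    rw [← Real.mul_rpow hx0.le (div_nonneg (by linarith) hx0.le)]
    congr 1
    field_simp
  rw [h2]
  have h3 : x ^ (p - 1) = x ^ p / x := by
    rw [Real.rpow_sub hx0, Real.rpow_one]
  rw [h3]
  have hxp : (0:ℝ) < x ^ p := Real.rpow_pos_of_pos hx0 p
  calc x ^ p * ((x - 1)/x) ^ p ≤ x ^ p * (1 + p * -(1/x)) := by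
        exact mul_le_mul_of_nonneg_left hb hxp.le
    _ = x ^ p - p * (x ^ p / x) := by ring

-- sum bound: ∑_{k<m} (k+1)^(p-1) ≤ m^p / p for p ∈ (0,1]
lemma aux_sum (p : ℝ) (hp0 : 0 < p) (hp1 : p ≤ 1) (m : ℕ) :
    ∑ k ∈ Finset.range m, ((k : ℝ) + 1) ^ (p - 1) ≤ (m : ℝ) ^ p / p := by
  induction m with
  | zero => simp [Real.zero_rpow hp0.ne']
  | succ m ih =>
    rw [Finset.sum_range_succ]
    have key : ((m : ℝ) + 1) ^ (p - 1) ≤ (((m : ℝ) + 1) ^ p - (m : ℝ) ^ p) / p := by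
      rw [le_div_iff₀ hp0]
      have := aux_bern (x := (m : ℝ) + 1) (by simp) hp0.le hp1
      have h2 : ((m : ℝ) + 1 - 1) = (m : ℝ) := by ring
      rw [h2] at this
      linarith
    push_cast
    have hsplit : (((m : ℝ) + 1) ^ p - (m : ℝ) ^ p) / p + (m : ℝ) ^ p / p
        = ((m : ℝ) + 1) ^ p / p := by ring
    linarith

lemma aux_abound (s : ℝ) (hs0 : 0 < s) (hs1 : s < 1) (a : ℕ → ℝ) (h0 : a 0 = 1)
    (hpos : ∀ n, 0 ≤ a n)
    (hrec : ∀ n : ℕ, ((n : ℝ) + 1) * a (n + 1) = ((n : ℝ) + s) * a n) :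
    ∀ n : ℕ, a n ≤ ((n : ℝ) + 1) ^ (s - 1) := by
  intro n
  induction n with
  | zero => simp [h0, Real.one_rpow]
  | succ n ih =>
    have h1 : (0:ℝ) < (n : ℝ) + 1 := by positivity
    have h2 : (0:ℝ) < (n : ℝ) + 2 := by positivity
    have ha1 : a (n + 1) = ((n : ℝ) + s) * a n / ((n : ℝ) + 1) := by
      field_simp
      linarith [hrec n]
    set A' := ((n : ℝ) + 1) ^ (s - 1) with hA'd
    set B' := ((n : ℝ) + 2) ^ (s - 1) with hB'd
    set A := ((n : ℝ) + 1) ^ s with hAd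
    set B := ((n : ℝ) + 2) ^ s with hBd
    have hA'mul : A' * ((n : ℝ) + 1) = A := by
      rw [hA'd, hAd, Real.rpow_sub h1, Real.rpow_one]
      field_simp
    have hB'mul : B' * ((n : ℝ) + 2) = B := by
      rw [hB'd, hBd, Real.rpow_sub h2, Real.rpow_one]
      field_simp
    have hb := aux_bern (x := (n : ℝ) + 2) (by linarith) hs0.le hs1.le
    have heq : ((n : ℝ) + 2 - 1) = (n : ℝ) + 1 := by ring
    rw [heq] at hb
    have hB'pos : (0:ℝ) < B' := Real.rpow_pos_of_pos h2 (s - 1)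
    have hA'pos : (0:ℝ) < A' := Real.rpow_pos_of_pos h1 (s - 1)
    have key : ((n : ℝ) + s) * A' ≤ ((n : ℝ) + 1) * B' := by
      have h3 : ((n : ℝ) + s) * A' * ((n : ℝ) + 1) ≤ ((n : ℝ) + 1) * B' * ((n : ℝ) + 1) := by
        nlinarith [hb, hA'mul, hB'mul, hB'pos, sq_nonneg (1 - s)]
      exact le_of_mul_le_mul_right h3 h1
    have goal2 : ((n : ℕ) + 1 : ℝ) + 1 = (n : ℝ) + 2 := by push_cast; ring
    rw [ha1]
    push_cast
    rw [show ((n : ℝ) + 1 + 1) = (n : ℝ) + 2 by ring]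
    rw [div_le_iff₀ h1]
    calc ((n : ℝ) + s) * a n ≤ ((n : ℝ) + s) * A' := by
          apply mul_le_mul_of_nonneg_left ih (by linarith)
      _ ≤ ((n : ℝ) + 1) * B' := key
      _ = B' * ((n : ℝ) + 1) := by ring

lemma aux_conv (s : ℝ) (hs0 : 0 < s) (hs1 : s < 1) (a : ℕ → ℝ) (hpos : ∀ n, 0 ≤ a n)
    (hbound : ∀ n : ℕ, a n ≤ ((n : ℝ) + 1) ^ (s - 1)) (m : ℕ) (hm : 1 ≤ m) :
    ∑ k ∈ Finset.range m, a k * ((m - k : ℕ) : ℝ) ^ (-s) ≤ 2 / s + 2 / (1 - s) := by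
  set M : ℝ := ((m : ℝ) + 1) / 2 with hM
  have hm1 : (1:ℝ) ≤ (m : ℝ) := by exact_mod_cast hm
  have hMpos : 0 < M := by rw [hM]; linarith
  -- pointwise bound
  have hpt : ∀ k ∈ Finset.range m, a k * ((m - k : ℕ) : ℝ) ^ (-s)
      ≤ M ^ (-s) * ((k : ℝ) + 1) ^ (s - 1) + M ^ (s - 1) * ((m - k : ℕ) : ℝ) ^ (-s) := by
    intro k hk
    rw [Finset.mem_range] at hk
    set i : ℝ := (k : ℝ) + 1 with hi
    set j : ℝ := ((m - k : ℕ) : ℝ) with hj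
    have hij : i + j = (m : ℝ) + 1 := by
      rw [hi, hj, Nat.cast_sub hk.le]
      ring
    have hipos : (0:ℝ) < i := by rw [hi]; positivity
    have hjpos : (0:ℝ) < j := by
      rw [hj]
      have : 0 < m - k := Nat.sub_pos_of_lt hk
      exact_mod_cast this
    have hterm : a k * j ^ (-s) ≤ i ^ (s - 1) * j ^ (-s) :=
      mul_le_mul_of_nonneg_right (hbound k) (Real.rpow_nonneg hjpos.le _)
    have hsplit : i ^ (s - 1) * j ^ (-s) ≤ M ^ (-s) * i ^ (s - 1) + M ^ (s - 1) * j ^ (-s) := by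
      rcases le_total i j with h | h
      · have hMj : M ≤ j := by rw [hM]; linarith
        have : j ^ (-s) ≤ M ^ (-s) := Real.rpow_le_rpow_of_nonpos hMpos hMj (by linarith)
        have h1 : i ^ (s - 1) * j ^ (-s) ≤ M ^ (-s) * i ^ (s - 1) := by
          rw [mul_comm (M ^ (-s))]
          exact mul_le_mul_of_nonneg_left this (Real.rpow_nonneg hipos.le _)
        have h2 : 0 ≤ M ^ (s - 1) * j ^ (-s) := by positivity
        linarith
      · have hMi : M ≤ i := by rw [hM]; linarith
        have : i ^ (s - 1) ≤ M ^ (s - 1) := Real.rpow_le_rpow_of_nonpos hMpos hMi (by linarith)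
        have h1 : i ^ (s - 1) * j ^ (-s) ≤ M ^ (s - 1) * j ^ (-s) :=
          mul_le_mul_of_nonneg_right this (Real.rpow_nonneg hjpos.le _)
        have h2 : 0 ≤ M ^ (-s) * i ^ (s - 1) := by positivity
        linarith
    exact hterm.trans hsplit
  have hsum := Finset.sum_le_sum hpt
  rw [Finset.sum_add_distrib, ← Finset.mul_sum, ← Finset.mul_sum] at hsum
  -- bound the two sums
  have hS1 : ∑ k ∈ Finset.range m, ((k : ℝ) + 1) ^ (s - 1) ≤ (m : ℝ) ^ s / s :=
    aux_sum s hs0 hs1.le m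
  have hreflect : ∑ k ∈ Finset.range m, ((m - k : ℕ) : ℝ) ^ (-s)
      = ∑ k ∈ Finset.range m, ((k : ℝ) + 1) ^ (-s) := by
    rw [← Finset.sum_range_reflect (fun k => ((k : ℝ) + 1) ^ (-s)) m]
    refine Finset.sum_congr rfl (fun k hk => ?_)
    rw [Finset.mem_range] at hk
    congr 2
    have h5 : m - 1 - k + 1 = m - k := by omega
    rw [← Nat.cast_add_one, h5]
  have hS2 : ∑ k ∈ Finset.range m, ((m - k : ℕ) : ℝ) ^ (-s) ≤ (m : ℝ) ^ (1 - s) / (1 - s) := by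
    rw [hreflect]
    have := aux_sum (1 - s) (by linarith) (by linarith) m
    refine le_trans (Finset.sum_le_sum (fun k _ => ?_)) this
    rw [show (1 - s - 1) = -s by ring]
  -- combine
  have hmpos : (0:ℝ) < (m : ℝ) := by linarith
  have hfac1 : M ^ (-s) * ((m : ℝ) ^ s / s) ≤ 2 / s := by
    rw [div_eq_mul_inv, div_eq_mul_inv, ← mul_assoc]
    apply mul_le_mul_of_nonneg_right ?_ (by positivity)
    have h1 : (m : ℝ) ^ s ≤ (2 * M) ^ s := by
      apply Real.rpow_le_rpow hmpos.le ?_ hs0.le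
      rw [hM]; linarith
    have h2 : (2 * M) ^ s = 2 ^ s * M ^ s := Real.mul_rpow (by norm_num) hMpos.le
    have h3 : M ^ (-s) * M ^ s = 1 := by
      rw [← Real.rpow_add hMpos]
      simp
    calc M ^ (-s) * (m : ℝ) ^ s ≤ M ^ (-s) * (2 ^ s * M ^ s) := by
          rw [← h2]
          exact mul_le_mul_of_nonneg_left h1 (Real.rpow_nonneg hMpos.le _)
      _ = 2 ^ s * (M ^ (-s) * M ^ s) := by ring
      _ = 2 ^ s := by rw [h3]; ring
      _ ≤ 2 := by
          nth_rewrite 2 [show (2:ℝ) = 2 ^ (1:ℝ) by rw [Real.rpow_one]]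
          exact Real.rpow_le_rpow_of_exponent_le (by norm_num) hs1.le
  have hfac2 : M ^ (s - 1) * ((m : ℝ) ^ (1 - s) / (1 - s)) ≤ 2 / (1 - s) := by
    rw [div_eq_mul_inv, div_eq_mul_inv, ← mul_assoc]
    apply mul_le_mul_of_nonneg_right ?_ (by
      have h1s : (0:ℝ) < 1 - s := by linarith
      positivity)
    have h1 : (m : ℝ) ^ (1 - s) ≤ (2 * M) ^ (1 - s) := by
      apply Real.rpow_le_rpow hmpos.le ?_ (by linarith)
      rw [hM]; linarith
    have h2 : (2 * M) ^ (1 - s) = 2 ^ (1 - s) * M ^ (1 - s) := Real.mul_rpow (by norm_num) hMpos.le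
    have h3 : M ^ (s - 1) * M ^ (1 - s) = 1 := by
      rw [← Real.rpow_add hMpos]
      simp
    calc M ^ (s - 1) * (m : ℝ) ^ (1 - s) ≤ M ^ (s - 1) * (2 ^ (1 - s) * M ^ (1 - s)) := by
          rw [← h2]
          exact mul_le_mul_of_nonneg_left h1 (Real.rpow_nonneg hMpos.le _)
      _ = 2 ^ (1 - s) * (M ^ (s - 1) * M ^ (1 - s)) := by ring
      _ = 2 ^ (1 - s) := by rw [h3]; ring
      _ ≤ 2 := by
          nth_rewrite 2 [show (2:ℝ) = 2 ^ (1:ℝ) by rw [Real.rpow_one]]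
          exact Real.rpow_le_rpow_of_exponent_le (by norm_num) (by linarith)
  calc ∑ k ∈ Finset.range m, a k * ((m - k : ℕ) : ℝ) ^ (-s)
      ≤ M ^ (-s) * ∑ k ∈ Finset.range m, ((k : ℝ) + 1) ^ (s - 1)
        + M ^ (s - 1) * ∑ k ∈ Finset.range m, ((m - k : ℕ) : ℝ) ^ (-s) := hsum
    _ ≤ M ^ (-s) * ((m : ℝ) ^ s / s) + M ^ (s - 1) * ((m : ℝ) ^ (1 - s) / (1 - s)) := by
        have g1 := mul_le_mul_of_nonneg_left hS1 (Real.rpow_nonneg hMpos.le (-s))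
        have g2 := mul_le_mul_of_nonneg_left hS2 (Real.rpow_nonneg hMpos.le (s - 1))
        linarith
    _ ≤ 2 / s + 2 / (1 - s) := by linarith

theorem stmt7 (β : ℝ) (hβ : 0 < β) (η : ℤ) (hη : (η : ℝ) < β) (hη2 : β ≤ (η : ℝ) + 1)
    (a : ℕ → ℝ) (ha0 : ∀ k, 0 ≤ a k)
    (ha : ∀ z : ℝ, |z| < 1 → HasSum (fun k : ℕ => a k * z ^ k) ((1 - z) ^ (β - (η : ℝ) - 1))) :
    ∃ C : ℝ, 0 < C ∧ ∀ m : ℕ, 1 ≤ m →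
      ∑ k ∈ Finset.range m, a k * ((m - k : ℕ) : ℝ) ^ (β - (η : ℝ) - 1) ≤ C := by
  set γ : ℝ := β - (η : ℝ) - 1 with hγ
  have hγ1 : -1 < γ := by rw [hγ]; linarith
  have hγ0 : γ ≤ 0 := by rw [hγ]; linarith
  have hrec := aux_rec γ a ha
  have h0 : a 0 = 1 := by
    have h1 := ha 0 (by norm_num)
    have h2 : HasSum (fun k : ℕ => a k * (0:ℝ) ^ k) (a 0) := by
      have := hasSum_single (f := fun k : ℕ => a k * (0:ℝ) ^ k) 0
        (fun b hb => by simp [zero_pow hb])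
      simpa using this
    have h3 := h2.unique h1
    simpa [Real.one_rpow] using h3
  rcases eq_or_lt_of_le hγ0 with hγz | hγneg
  · -- case γ = 0
    refine ⟨1, one_pos, fun m hm => ?_⟩
    have hz : ∀ n : ℕ, 1 ≤ n → a n = 0 := by
      intro n hn
      induction n with
      | zero => omega
      | succ n ih =>
        have h4 := hrec n
        rw [hγz] at h4
        rcases Nat.eq_zero_or_pos n with rfl | hn'
        · have : (0:ℝ) + 1 ≠ 0 := by norm_num
          have h5 : ((0:ℕ):ℝ) - 0 = 0 := by norm_num
          rw [h5, zero_mul] at h4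
          have h6 : ((0:ℕ):ℝ) + 1 ≠ 0 := by norm_num
          field_simp at h4
          simpa using h4
        · rw [ih hn', mul_zero] at h4
          have h6 : ((n:ℕ):ℝ) + 1 ≠ 0 := by positivity
          exact (mul_eq_zero.1 h4).resolve_left h6
    have hsum : ∑ k ∈ Finset.range m, a k * ((m - k : ℕ) : ℝ) ^ γ
        = a 0 * ((m - 0 : ℕ) : ℝ) ^ γ := by
      refine Finset.sum_eq_single_of_mem 0 (Finset.mem_range.2 (by omega)) ?_
      intro b _ hb0
      rw [hz b (by omega), zero_mul]
    rw [hsum, h0, hγz, Real.rpow_zero, one_mul]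
  · -- case γ < 0
    set s : ℝ := -γ with hs
    have hs0 : 0 < s := by rw [hs]; linarith
    have hs1 : s < 1 := by rw [hs]; linarith
    have hrec' : ∀ n : ℕ, ((n : ℝ) + 1) * a (n + 1) = ((n : ℝ) + s) * a n := by
      intro n
      have := hrec n
      rw [hs]
      rw [show ((n:ℝ) + -γ) = (n:ℝ) - γ by ring]
      exact this
    have hbound := aux_abound s hs0 hs1 a h0 ha0 hrec'
    have h1s : (0:ℝ) < 1 - s := by linarith
    refine ⟨2 / s + 2 / (1 - s), by positivity, fun m hm => ?_⟩
    have hconv := aux_conv s hs0 hs1 a ha0 hbound m hm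
    have hγs : γ = -s := by rw [hs]; ring
    rw [hγs]
    exact hconv
end

section
/- Let M > 0 and let Ẽ_M be the set of nonnegative sequences (a_n)_{n≥1} such that a_n ≤ M·∑_{k≥n} a_k/k for all n (with the sums finite). Let (λ_n)_{n≥1} be a positive nondecreasing sequence such that (λ_n/n) is nonincreasing, and define ρ_λ(a)_n = (λ_n/λ_{n+1})·a_{n+1}. Then ρ_λ maps Ẽ_M into Ẽ_M. -/
theorem stmt10 (M : ℝ) (hM : 0 < M) (a lam : ℕ → ℝ)
    (hlam_pos : ∀ n : ℕ, 1 ≤ n → 0 < lam n)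
    (hlam_mono : ∀ n : ℕ, 1 ≤ n → lam n ≤ lam (n + 1))
    (hlam_div : ∀ n : ℕ, 1 ≤ n → lam (n + 1) / (n + 1) ≤ lam n / n)
    (ha0 : ∀ n : ℕ, 1 ≤ n → 0 ≤ a n)
    (hsum : Summable (fun k : ℕ => a (k + 1) / (k + 1)))
    (ha : ∀ n : ℕ, 1 ≤ n → a n ≤ M * ∑' i : ℕ, a (n + i) / (n + i)) :
    Summable (fun k : ℕ => (lam (k + 1) / lam (k + 2)) * a (k + 2) / (k + 1)) ∧
    ∀ n : ℕ, 1 ≤ n →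
      0 ≤ (lam n / lam (n + 1)) * a (n + 1) ∧
      (lam n / lam (n + 1)) * a (n + 1) ≤
        M * ∑' i : ℕ, (lam (n + i) / lam (n + i + 1)) * a (n + i + 1) / (n + i) := by
  have hpos : ∀ k : ℕ, 0 < lam (k + 1) := fun k => hlam_pos (k + 1) (by omega)
  have hA : ∀ k : ℕ, 0 ≤ a (k + 1) := fun k => ha0 (k + 1) (by omega)
  have hratio_nonneg : ∀ k : ℕ, 0 ≤ lam (k + 1) / lam (k + 2) := fun k =>
    div_nonneg (hpos k).le (hpos (k + 1)).le
  have hratio_le_one : ∀ k : ℕ, lam (k + 1) / lam (k + 2) ≤ 1 := by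
    intro k
    rw [div_le_one (hpos (k + 1))]
    exact hlam_mono (k + 1) (by omega)
  -- key pointwise inequality
  have key : ∀ k : ℕ, a (k + 2) / ((k : ℝ) + 2) ≤
      (lam (k + 1) / lam (k + 2)) * a (k + 2) / ((k : ℝ) + 1) := by
    intro k
    have hd := hlam_div (k + 1) (by omega)
    push_cast at hd
    have hm : lam (k + 2) * ((k : ℝ) + 1) ≤ lam (k + 1) * ((k : ℝ) + 2) := by
      rw [div_le_div_iff₀ (by positivity) (by positivity)] at hd
      linarith
    rw [div_mul_eq_mul_div, div_div, div_le_div_iff₀ (by positivity)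
      (mul_pos (hpos (k + 1)) (by positivity : (0:ℝ) < (k : ℝ) + 1))]
    nlinarith [mul_le_mul_of_nonneg_left hm (hA (k + 1)), hA (k + 1)]
  -- nonnegativity of the transformed terms
  have hg0 : ∀ k : ℕ, 0 ≤ (lam (k + 1) / lam (k + 2)) * a (k + 2) / ((k : ℝ) + 1) := by
    intro k
    exact div_nonneg (mul_nonneg (hratio_nonneg k) (hA (k + 1))) (by positivity)
  -- summability of transformed sequence
  have hS : Summable (fun k : ℕ => (lam (k + 1) / lam (k + 2)) * a (k + 2) / ((k : ℝ) + 1)) := by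
    have h1 : Summable (fun k : ℕ => a (k + 2) / ((k : ℝ) + 2)) := by
      have := (summable_nat_add_iff 1).mpr hsum
      refine this.congr (fun k => ?_)
      push_cast
      ring_nf
    refine Summable.of_nonneg_of_le hg0 (fun k => ?_) (h1.mul_left 2)
    have h2 : (lam (k + 1) / lam (k + 2)) * a (k + 2) / ((k : ℝ) + 1) ≤
        a (k + 2) / ((k : ℝ) + 1) := by
      apply div_le_div_of_nonneg_right ?_ (by positivity)
      calc (lam (k + 1) / lam (k + 2)) * a (k + 2) ≤ 1 * a (k + 2) :=
        mul_le_mul_of_nonneg_right (hratio_le_one k) (hA (k + 1))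
      _ = a (k + 2) := one_mul _
    refine h2.trans ?_
    rw [div_le_iff₀ (by positivity), mul_comm (2:ℝ), mul_assoc, div_mul_eq_mul_div,
      le_div_iff₀ (by positivity)]
    nlinarith [hA (k + 1)]
  refine ⟨hS, fun n hn => ?_⟩
  obtain ⟨m, rfl⟩ : ∃ m, n = m + 1 := ⟨n - 1, by omega⟩
  constructor
  · exact mul_nonneg (hratio_nonneg m) (hA (m + 1))
  · -- summability of the shifted transformed series
    have hSsh : Summable (fun i : ℕ =>
        (lam (m + 1 + i) / lam (m + 1 + i + 1)) * a (m + 1 + i + 1) / ((m + 1 + i : ℕ) : ℝ)) := by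
      have := (summable_nat_add_iff m).mpr hS
      refine this.congr (fun i => ?_)
      have e1 : i + m + 1 = m + 1 + i := by omega
      have e2 : i + m + 2 = m + 1 + i + 1 := by omega
      rw [e1, e2]
      push_cast
      ring_nf
    have hfsh : Summable (fun i : ℕ => a (m + 2 + i) / ((m + 2 + i : ℕ) : ℝ)) := by
      have := (summable_nat_add_iff (m + 1)).mpr hsum
      refine this.congr (fun i => ?_)
      have e1 : i + (m + 1) + 1 = m + 2 + i := by omega
      rw [e1]
      push_cast
      ring_nf
    have hle : ∀ i : ℕ, a (m + 2 + i) / ((m + 2 + i : ℕ) : ℝ) ≤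
        (lam (m + 1 + i) / lam (m + 1 + i + 1)) * a (m + 1 + i + 1) / ((m + 1 + i : ℕ) : ℝ) := by
      intro i
      have := key (m + i)
      have e1 : m + i + 2 = m + 2 + i := by omega
      have e2 : m + i + 1 = m + 1 + i := by omega
      rw [e1, e2] at this
      have e3 : m + 1 + i + 1 = m + i + 2 := by omega
      rw [e3, e1]
      convert this using 2 <;> push_cast <;> ring
    have htsum : (∑' i : ℕ, a (m + 2 + i) / ((m + 2 + i : ℕ) : ℝ)) ≤
        ∑' i : ℕ, (lam (m + 1 + i) / lam (m + 1 + i + 1)) * a (m + 1 + i + 1) /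
          ((m + 1 + i : ℕ) : ℝ) :=
      Summable.tsum_le_tsum hle hfsh hSsh
    have h2 := ha (m + 2) (by omega)
    have e4 : (∑' i : ℕ, a (m + 2 + i) / (((m + 2 : ℕ) : ℝ) + (i : ℕ))) =
        ∑' i : ℕ, a (m + 2 + i) / ((m + 2 + i : ℕ) : ℝ) := by
      refine tsum_congr fun i => ?_; push_cast; ring_nf
    rw [e4] at h2
    have e5 : (∑' i : ℕ, (lam (m + 1 + i) / lam (m + 1 + i + 1)) * a (m + 1 + i + 1) /
          ((m + 1 + i : ℕ) : ℝ)) =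
        ∑' i : ℕ, (lam (m + 1 + i) / lam (m + 1 + i + 1)) * a (m + 1 + i + 1) /
          (((m + 1 : ℕ) : ℝ) + (i : ℕ)) := by
      refine tsum_congr fun i => ?_; push_cast; ring_nf
    rw [← e5]
    calc (lam (m + 1) / lam (m + 1 + 1)) * a (m + 1 + 1) ≤ 1 * a (m + 2) :=
          mul_le_mul_of_nonneg_right (hratio_le_one m) (hA (m + 1))
      _ = a (m + 2) := one_mul _
      _ ≤ M * ∑' i : ℕ, a (m + 2 + i) / ((m + 2 + i : ℕ) : ℝ) := h2
      _ ≤ M * ∑' i : ℕ, (lam (m + 1 + i) / lam (m + 1 + i + 1)) * a (m + 1 + i + 1) /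
            ((m + 1 + i : ℕ) : ℝ) := by
          exact mul_le_mul_of_nonneg_left htsum hM.le
end

section
/- Let n ≥ 1 be an integer and c > 0. There exists C > 0 such that for all integers j ≥ 2 and r ≥ 1, ∑_{m=1}^{∞} sup_{0≤s≤nr²} exp(-c·4^j r²/(m+s))·(m+s)^{-(1+n)} ≤ C·4^{-jn}·r^{-2n}. -/
open Finset Real Nat

private lemma exp_neg_le_fact_div (N : ℕ) {x : ℝ} (hx : 0 < x) :
    Real.exp (-x) ≤ (N ! : ℝ) / x ^ N := by
  have h1 : x ^ N / (N ! : ℝ) ≤ Real.exp x := by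
    refine le_trans ?_ (Real.sum_le_exp_of_nonneg hx.le (N + 1))
    exact Finset.single_le_sum (f := fun i => x ^ i / (i ! : ℝ))
      (fun i _ => by positivity) (Finset.self_mem_range_succ N)
  have h2 : (0:ℝ) < x ^ N / (N ! : ℝ) := by positivity
  rw [Real.exp_neg, ← inv_div]
  gcongr


private lemma tele_sum (x : ℝ) (hx : 0 < x) (d : ℕ) :
    ∑ i ∈ Finset.range d, 1 / ((x + i) * (x + i + 1)) = 1 / x - 1 / (x + d) := by
  induction d with
  | zero => simp
  | succ d ih =>
      rw [Finset.sum_range_succ, ih]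
      have h1 : x + (d:ℝ) ≠ 0 := by positivity
      have h2 : x + (d:ℝ) + 1 ≠ 0 := by positivity
      push_cast
      field_simp
      ring

set_option maxHeartbeats 1000000 in
theorem stmt13 (n : ℕ) (hn : 1 ≤ n) (c : ℝ) (hc : 0 < c) :
    ∃ C : ℝ, 0 < C ∧ ∀ j r : ℕ, 2 ≤ j → 1 ≤ r →
      Summable (fun m : ℕ =>
        (Finset.Icc 0 (n * r ^ 2)).sup' (Finset.nonempty_Icc.mpr (Nat.zero_le _))
          (fun s : ℕ => Real.exp (-(c * 4 ^ j * r ^ 2) / ((m + 1 + s : ℕ) : ℝ)) /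
            ((m + 1 + s : ℕ) : ℝ) ^ (1 + n))) ∧
      (∑' m : ℕ,
        (Finset.Icc 0 (n * r ^ 2)).sup' (Finset.nonempty_Icc.mpr (Nat.zero_le _))
          (fun s : ℕ => Real.exp (-(c * 4 ^ j * r ^ 2) / ((m + 1 + s : ℕ) : ℝ)) /
            ((m + 1 + s : ℕ) : ℝ) ^ (1 + n))) ≤
        C / ((4 : ℝ) ^ (j * n) * (r : ℝ) ^ (2 * n)) := by
  obtain ⟨k, hk⟩ : ∃ k, n = k + 1 := ⟨n - 1, by omega⟩
  set C0 : ℝ := ((n+1)! : ℝ) * (1 + 1/(16*c)) + 1 with hC0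
  have hC0pos : 0 < C0 := by positivity
  refine ⟨C0 / c ^ n, by positivity, ?_⟩
  intro j r hj hr
  set A : ℝ := c * 4 ^ j * (r:ℝ) ^ 2 with hAdef
  have hr1 : (1:ℝ) ≤ (r:ℝ) := by exact_mod_cast hr
  have hr2 : (1:ℝ) ≤ (r:ℝ) ^ 2 := by nlinarith
  have h4j : (16:ℝ) ≤ 4 ^ j := by
    calc (16:ℝ) = 4 ^ 2 := by norm_num
    _ ≤ 4 ^ j := pow_le_pow_right₀ (by norm_num) hj
  have hA16 : 16 * c ≤ A := by
    have h1 : c * 16 ≤ c * 4 ^ j := mul_le_mul_of_nonneg_left h4j hc.le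
    have h2 : c * 4 ^ j * 1 ≤ c * 4 ^ j * (r:ℝ) ^ 2 := by
      apply mul_le_mul_of_nonneg_left hr2
      positivity
    simp only [hAdef]
    linarith
  have hA0 : 0 < A := lt_of_lt_of_le (by positivity) hA16
  set f : ℕ → ℝ := fun m =>
    (Finset.Icc 0 (n * r ^ 2)).sup' (Finset.nonempty_Icc.mpr (Nat.zero_le _))
      (fun s : ℕ => Real.exp (-(c * 4 ^ j * (r:ℝ) ^ 2) / ((m + 1 + s : ℕ) : ℝ)) /
        ((m + 1 + s : ℕ) : ℝ) ^ (1 + n)) with hfdef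
  have ht1 : ∀ m s : ℕ, (1:ℝ) ≤ ((m + 1 + s : ℕ) : ℝ) := by
    intro m s; exact_mod_cast Nat.one_le_iff_ne_zero.mpr (by omega)
  -- first pointwise bound
  have hfa : ∀ m : ℕ, f m ≤ ((n+1)! : ℝ) / A ^ (n+1) := by
    intro m
    apply Finset.sup'_le
    intro s _
    set t : ℝ := ((m + 1 + s : ℕ) : ℝ) with htdef
    have ht : (1:ℝ) ≤ t := ht1 m s
    have ht0 : 0 < t := lt_of_lt_of_le one_pos ht
    have hx : 0 < A / t := by positivity
    have h := exp_neg_le_fact_div (n+1) hx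
    have hdiv : -A / t = -(A / t) := by ring
    rw [hdiv]
    calc Real.exp (-(A/t)) / t ^ (1+n)
        ≤ (((n+1)! : ℝ) / (A/t) ^ (n+1)) / t ^ (1+n) := by gcongr
      _ = ((n+1)! : ℝ) / A ^ (n+1) := by
          rw [add_comm 1 n, div_pow]
          field_simp
  -- second pointwise bound
  have hfb : ∀ m : ℕ, f m ≤ 1 / ((m:ℝ) + 1) ^ (n+1) := by
    intro m
    apply Finset.sup'_le
    intro s _
    set t : ℝ := ((m + 1 + s : ℕ) : ℝ) with htdef
    have ht : (1:ℝ) ≤ t := ht1 m s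
    have ht0 : 0 < t := lt_of_lt_of_le one_pos ht
    have htm : (m:ℝ) + 1 ≤ t := by
      rw [htdef]; push_cast; linarith [Nat.cast_nonneg (α := ℝ) s]
    have hexp : Real.exp (-A / t) ≤ 1 := by
      apply Real.exp_le_one_iff.mpr
      rw [neg_div]
      simp only [neg_nonpos]
      positivity
    calc Real.exp (-A/t) / t ^ (1+n) ≤ 1 / t ^ (1+n) := by gcongr
      _ ≤ 1 / ((m:ℝ)+1) ^ (n+1) := by
          rw [add_comm 1 n]
          have : (0:ℝ) < ((m:ℝ)+1) ^ (n+1) := by positivity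
          apply one_div_le_one_div_of_le this
          exact pow_le_pow_left₀ (by positivity) htm _
  -- nonnegativity
  have hf0 : ∀ m : ℕ, 0 ≤ f m := by
    intro m
    have h0 : (0:ℕ) ∈ Finset.Icc 0 (n * r ^ 2) := by simp
    refine le_trans ?_ (Finset.le_sup' _ h0)
    positivity
  -- summability
  have hsummable : Summable f := by
    apply Summable.of_nonneg_of_le hf0 hfb
    have h1 : Summable (fun m : ℕ => 1 / (m:ℝ) ^ (n+1)) :=
      summable_one_div_nat_pow.mpr (by omega)
    have h2 := (summable_nat_add_iff 1).mpr h1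
    apply h2.congr
    intro m
    push_cast
    try ring_nf
  refine ⟨hsummable, ?_⟩
  -- partial sum bound
  set M : ℕ := ⌈A⌉₊ with hMdef
  have hM1 : 1 ≤ M := Nat.one_le_iff_ne_zero.mpr (by
    simp only [hMdef, ne_eq, Nat.ceil_eq_zero, not_le]; exact hA0)
  have hMA : A ≤ (M:ℝ) := Nat.le_ceil A
  have hMA' : (M:ℝ) ≤ A + 1 := le_of_lt (Nat.ceil_lt_add_one hA0.le)
  have hbound : ∀ K : ℕ, ∑ m ∈ Finset.range K, f m ≤ (M:ℝ) * (((n+1)! : ℝ) / A ^ (n+1)) + 1 / A ^ n := by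
    intro K
    have hApow : (0:ℝ) < A ^ n := by positivity
    rcases le_or_gt K M with hKM | hMK
    · have h1 : ∑ m ∈ Finset.range K, f m ≤ (K:ℝ) * (((n+1)! : ℝ) / A ^ (n+1)) := by
        have := Finset.sum_le_card_nsmul (Finset.range K) f (((n+1)! : ℝ) / A ^ (n+1))
          (fun m _ => hfa m)
        simpa [nsmul_eq_mul] using this
      have h2 : (K:ℝ) ≤ (M:ℝ) := by exact_mod_cast hKM
      have h3 : (0:ℝ) ≤ ((n+1)! : ℝ) / A ^ (n+1) := by positivity
      nlinarith [one_div_pos.mpr hApow]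
    · rw [← Finset.sum_range_add_sum_Ico f hMK.le]
      have h1 : ∑ m ∈ Finset.range M, f m ≤ (M:ℝ) * (((n+1)! : ℝ) / A ^ (n+1)) := by
        have := Finset.sum_le_card_nsmul (Finset.range M) f (((n+1)! : ℝ) / A ^ (n+1))
          (fun m _ => hfa m)
        simpa [nsmul_eq_mul] using this
      have h2 : ∑ m ∈ Finset.Ico M K, f m ≤ 1 / A ^ n := by
        have hterm : ∀ m ∈ Finset.Ico M K, f m ≤ (1 / A ^ k) * (1 / ((m:ℝ) * ((m:ℝ) + 1))) := by
          intro m hm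
          obtain ⟨hmM, _⟩ := Finset.mem_Ico.mp hm
          have hm1 : 1 ≤ m := le_trans hM1 hmM
          have hmR : (1:ℝ) ≤ (m:ℝ) := by exact_mod_cast hm1
          have hmA : A ≤ (m:ℝ) := le_trans hMA (by exact_mod_cast hmM)
          refine le_trans (hfb m) ?_
          have e1 : ((m:ℝ) + 1) ^ (n+1) = ((m:ℝ)+1) ^ k * (((m:ℝ)+1) * ((m:ℝ)+1)) := by
            rw [hk]; ring
          have e2 : A ^ k * ((m:ℝ) * ((m:ℝ)+1)) ≤ ((m:ℝ)+1) ^ k * (((m:ℝ)+1) * ((m:ℝ)+1)) := by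
            apply mul_le_mul
            · apply pow_le_pow_left₀ hA0.le; linarith
            · nlinarith
            · nlinarith
            · positivity
          rw [e1, _root_.div_mul_div_comm, one_mul]
          apply one_div_le_one_div_of_le
          · positivity
          · exact e2
        calc ∑ m ∈ Finset.Ico M K, f m
            ≤ ∑ m ∈ Finset.Ico M K, (1 / A ^ k) * (1 / ((m:ℝ) * ((m:ℝ) + 1))) :=
              Finset.sum_le_sum hterm
          _ = (1 / A ^ k) * ∑ m ∈ Finset.Ico M K, 1 / ((m:ℝ) * ((m:ℝ) + 1)) := by
              rw [Finset.mul_sum]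
          _ ≤ (1 / A ^ k) * (1 / A) := by
              have hMpos : (0:ℝ) < (M:ℝ) := lt_of_lt_of_le hA0 hMA
              have hsum : ∑ m ∈ Finset.Ico M K, 1 / ((m:ℝ) * ((m:ℝ) + 1)) ≤ 1 / (M:ℝ) := by
                rw [Finset.sum_Ico_eq_sum_range]
                have := tele_sum (M:ℝ) hMpos (K - M)
                have heq : ∑ i ∈ Finset.range (K - M), 1 / (((M + i : ℕ):ℝ) * (((M + i : ℕ):ℝ) + 1))
                    = ∑ i ∈ Finset.range (K - M), 1 / (((M:ℝ) + i) * ((M:ℝ) + i + 1)) := by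
                  apply Finset.sum_congr rfl
                  intro i _
                  push_cast
                  ring_nf
                rw [heq, this]
                have : 0 < (M:ℝ) + (K - M : ℕ) := by positivity
                have h1M : 0 ≤ 1 / ((M:ℝ) + (K - M : ℕ)) := by positivity
                linarith
              have h1Ak : (0:ℝ) ≤ 1 / A ^ k := by positivity
              calc (1 / A ^ k) * ∑ m ∈ Finset.Ico M K, 1 / ((m:ℝ) * ((m:ℝ) + 1))
                  ≤ (1 / A ^ k) * (1 / (M:ℝ)) := by
                    apply mul_le_mul_of_nonneg_left hsum h1Ak
                _ ≤ (1 / A ^ k) * (1 / A) := by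
                    apply mul_le_mul_of_nonneg_left _ h1Ak
                    apply one_div_le_one_div_of_le hA0 hMA
          _ = 1 / A ^ n := by
              rw [hk, pow_succ, one_div_mul_one_div]
      linarith
  have htsum : ∑' m, f m ≤ (M:ℝ) * (((n+1)! : ℝ) / A ^ (n+1)) + 1 / A ^ n :=
    Real.tsum_le_of_sum_range_le hf0 hbound
  -- final arithmetic
  have hfinal : (M:ℝ) * (((n+1)! : ℝ) / A ^ (n+1)) + 1 / A ^ n ≤ C0 / A ^ n := by
    have hApow : (0:ℝ) < A ^ n := by positivity
    have hM2 : (M:ℝ) ≤ A * (1 + 1/(16*c)) := by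
      have h16 : (1:ℝ) ≤ A / (16*c) := by
        rw [le_div_iff₀ (by positivity)]; linarith
      have hAc : A / (16*c) = A * (1/(16*c)) := by rw [mul_one_div]
      have : A * (1 + 1/(16*c)) = A + A / (16*c) := by rw [mul_add, mul_one, ← hAc]
      linarith
    have e : A * (1 + 1/(16*c)) * (((n+1)! : ℝ) / A ^ (n+1)) = ((n+1)! : ℝ) * (1 + 1/(16*c)) / A ^ n := by
      rw [pow_succ]
      field_simp
    have h1 : (M:ℝ) * (((n+1)! : ℝ) / A ^ (n+1)) ≤ ((n+1)! : ℝ) * (1 + 1/(16*c)) / A ^ n := by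
      rw [← e]
      apply mul_le_mul_of_nonneg_right hM2 (by positivity)
    have h2 : ((n+1)! : ℝ) * (1 + 1/(16*c)) / A ^ n + 1 / A ^ n = C0 / A ^ n := by
      rw [← add_div]
    linarith
  have hAn : A ^ n = c ^ n * ((4:ℝ) ^ (j * n) * (r:ℝ) ^ (2 * n)) := by
    rw [hAdef, mul_pow, mul_pow, ← pow_mul, ← pow_mul, mul_assoc]
  have hgoal : C0 / A ^ n = C0 / c ^ n / ((4:ℝ) ^ (j * n) * (r:ℝ) ^ (2 * n)) := by
    rw [hAn, div_div]
  calc ∑' m, f m ≤ (M:ℝ) * (((n+1)! : ℝ) / A ^ (n+1)) + 1 / A ^ n := htsum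
    _ ≤ C0 / A ^ n := hfinal
    _ = C0 / c ^ n / ((4:ℝ) ^ (j * n) * (r:ℝ) ^ (2 * n)) := hgoal
end

section
/- Let n ≥ 1 be an integer and c > 0. There exists C > 0 such that for all integers j ≥ 2 and r ≥ 1, ∑_{m=1}^{∞} m^{-1/2} · sup_{0≤s≤nr²} exp(-c·4^j r²/(m+s))·(m+s)^{-(n+1/2)} ≤ C·4^{-jn}·r^{-2n}. -/
lemma aux_exp_pow (k : ℕ) (hk : 1 ≤ k) (y : ℝ) (hy : 0 ≤ y) :
    Real.exp (-y) * y ^ k ≤ (k : ℝ) ^ k := by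
  have hk0 : (0:ℝ) < k := by exact_mod_cast hk
  have h1 : y / k ≤ Real.exp (y / k) := by
    linarith [Real.add_one_le_exp (y / k)]
  have h2 : (y / k) ^ k ≤ Real.exp (y / k) ^ k :=
    pow_le_pow_left₀ (by positivity) h1 k
  have h3 : Real.exp (y / k) ^ k = Real.exp y := by
    rw [← Real.exp_nat_mul]
    congr 1; field_simp
  have h4 : y ^ k / (k:ℝ) ^ k ≤ Real.exp y := by
    rw [div_pow] at h2; rw [h3] at h2; exact h2
  have h5 : y ^ k ≤ (k:ℝ)^k * Real.exp y := by
    rw [div_le_iff₀ (by positivity)] at h4; linarith [h4]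
  rw [Real.exp_neg, mul_comm]
  rw [inv_eq_one_div, mul_one_div, div_le_iff₀ (Real.exp_pos y)]
  linarith

lemma aux_exp_rpow (n : ℕ) (y : ℝ) (hy : 0 < y) :
    Real.exp (-y) * y ^ ((n:ℝ) + 1/2) ≤ 1 + ((n:ℝ)+1) ^ (n+1) := by
  have hE : (0:ℝ) ≤ ((n:ℝ)+1)^(n+1) := by positivity
  rcases le_or_gt y 1 with h | h
  · have h1 : y ^ ((n:ℝ)+1/2) ≤ 1 := Real.rpow_le_one hy.le h (by positivity)
    have h2 : Real.exp (-y) ≤ 1 := Real.exp_le_one_iff.mpr (by linarith)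
    nlinarith [Real.exp_pos (-y), Real.rpow_nonneg hy.le ((n:ℝ)+1/2)]
  · have h1 : y ^ ((n:ℝ)+1/2) ≤ y ^ ((n:ℕ)+1 : ℕ) := by
      rw [← Real.rpow_natCast y (n+1)]
      apply Real.rpow_le_rpow_of_exponent_le h.le
      push_cast; linarith
    have h2 := aux_exp_pow (n+1) (by omega) y (by linarith)
    have h3 : Real.exp (-y) * y ^ ((n:ℝ)+1/2) ≤ Real.exp (-y) * y ^ (n+1) :=
      mul_le_mul_of_nonneg_left h1 (Real.exp_pos (-y)).le
    push_cast at h2 ⊢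
    nlinarith

lemma aux_sqrt_sum : ∀ M : ℕ, ∑ m ∈ Finset.range M, ((m:ℝ)+1) ^ (-(1/2):ℝ) ≤ 2 * Real.sqrt M := by
  intro M
  induction M with
  | zero => simp
  | succ M ih =>
    rw [Finset.sum_range_succ]
    have hM1 : ((M:ℝ)+1) ^ (-(1/2):ℝ) = 1 / Real.sqrt ((M:ℝ)+1) := by
      rw [Real.rpow_neg (by positivity), Real.sqrt_eq_rpow]
      norm_num
    have hu : Real.sqrt M ^ 2 = (M:ℝ) := Real.sq_sqrt (by positivity)
    have hv : Real.sqrt ((M:ℝ)+1) ^ 2 = (M:ℝ)+1 := Real.sq_sqrt (by positivity)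
    have huv : Real.sqrt M ≤ Real.sqrt ((M:ℝ)+1) := Real.sqrt_le_sqrt (by linarith)
    have hv0 : 0 < Real.sqrt ((M:ℝ)+1) := Real.sqrt_pos.mpr (by positivity)
    have hu0 : 0 ≤ Real.sqrt M := Real.sqrt_nonneg _
    have key : 1 / Real.sqrt ((M:ℝ)+1) ≤ 2 * (Real.sqrt ((M:ℝ)+1) - Real.sqrt M) := by
      rw [div_le_iff₀ hv0]
      nlinarith [sq_nonneg (Real.sqrt M - Real.sqrt ((M:ℝ)+1))]
    have hcast : (((M+1 : ℕ)):ℝ) = (M:ℝ)+1 := by push_cast; ring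
    rw [hcast, hM1]
    linarith

lemma aux_key (n : ℕ) (hn : 1 ≤ n) (m : ℕ) (hm : 1 ≤ m) :
    1/((m:ℝ)+1)^(n+1) ≤ (1/(n:ℝ)) * (1/(m:ℝ)^n - 1/((m:ℝ)+1)^n) := by
  set a : ℝ := (m:ℝ) with ha
  have ha1 : (1:ℝ) ≤ a := by rw [ha]; exact_mod_cast hm
  have ha0 : 0 < a := by linarith
  have hn0 : (0:ℝ) < n := by exact_mod_cast hn
  have hP : 0 < a ^ n := by positivity
  have hQ : 0 < (a+1) ^ n := by positivity
  have hber : 1 + ((n:ℝ)+1) * (1/a) ≤ (1 + 1/a) ^ (n+1) := by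
    have h0a : (0:ℝ) ≤ 1/a := by positivity
    have := one_add_mul_le_pow (by linarith : (-2:ℝ) ≤ 1/a) (n+1)
    push_cast at this ⊢
    linarith
  have h1a : 1 + 1/a = (a+1)/a := by field_simp
  have hber2 : a^(n+1) + ((n:ℝ)+1) * a^n ≤ (a+1)^(n+1) := by
    rw [h1a, div_pow] at hber
    have hP1 : 0 < a ^ (n+1) := by positivity
    rw [le_div_iff₀ hP1] at hber
    have he : (1 + ((n:ℝ)+1) * (1/a)) * a^(n+1) = a^(n+1) + ((n:ℝ)+1) * a^n := by
      field_simp; ring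
    linarith [he ▸ hber]
  have hkey : (n:ℝ) * a^n ≤ (a+1)*((a+1)^n - a^n) := by
    have e1 : (a+1)^(n+1) = (a+1) * (a+1)^n := by ring
    have e2 : a^(n+1) = a * a^n := by ring
    nlinarith
  rw [div_sub_div _ _ hP.ne' hQ.ne', one_mul, mul_one, one_div_mul_eq_div, div_div,
    div_le_div_iff₀ (by positivity) (by positivity)]
  have e1 : (a+1)^(n+1) = (a+1) * (a+1)^n := by ring
  nlinarith [mul_le_mul_of_nonneg_right hkey hQ.le]

lemma aux_tail (n : ℕ) (hn : 1 ≤ n) (M : ℕ) (hM : 1 ≤ M) (N : ℕ) :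
    ∑ m ∈ Finset.range N, (if m < M then 0 else 1/((m:ℝ)+1)^(n+1)) ≤ (1/(n:ℝ)) * (1/(M:ℝ)^n) := by
  set φ : ℕ → ℝ := fun m => 1/((max m M : ℕ):ℝ)^n with hφ
  have hpt : ∀ m : ℕ, (if m < M then 0 else 1/((m:ℝ)+1)^(n+1)) ≤ (1/(n:ℝ)) * (φ m - φ (m+1)) := by
    intro m
    by_cases h : m < M
    · rw [if_pos h]
      have h1 : max m M = M := max_eq_right h.le
      have h2 : max (m+1) M = M := max_eq_right h
      simp only [hφ, h1, h2, sub_self, mul_zero, le_refl]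
    · rw [if_neg h]
      push_neg at h
      have h1 : max m M = m := max_eq_left h
      have h2 : max (m+1) M = m+1 := max_eq_left (by omega)
      have := aux_key n hn m (le_trans hM h)
      simp only [hφ, h1, h2]
      push_cast
      convert this using 3
  have hsum := Finset.sum_le_sum (fun m (_ : m ∈ Finset.range N) => hpt m)
  rw [← Finset.mul_sum, Finset.sum_range_sub' φ] at hsum
  have hφ0 : φ 0 = 1/(M:ℝ)^n := by simp [hφ, Nat.max_eq_right (Nat.zero_le M)]
  have hφN : 0 ≤ φ N := by positivity
  have hn0 : (0:ℝ) < n := by exact_mod_cast hn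
  calc ∑ m ∈ Finset.range N, (if m < M then 0 else 1/((m:ℝ)+1)^(n+1))
      ≤ (1/(n:ℝ)) * (φ 0 - φ N) := hsum
    _ ≤ (1/(n:ℝ)) * (1/(M:ℝ)^n) := by rw [hφ0]; apply mul_le_mul_of_nonneg_left (by linarith) (by positivity)

lemma aux_summable (n : ℕ) (hn : 1 ≤ n) : Summable (fun m : ℕ => 1/((m:ℝ)+1)^(n+1)) := by
  have h2 : Summable (fun m : ℕ => 1/((m:ℝ))^2) := by
    rw [Real.summable_one_div_nat_pow]
    norm_num
  have h3 : Summable (fun m : ℕ => 1/((m:ℝ)+1)^2) := by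
    have := (summable_nat_add_iff 1).mpr h2
    convert this using 2 with m
    · rfl
    · push_cast
      ring_nf
  apply Summable.of_nonneg_of_le (fun m => by positivity) _ h3
  intro m
  apply one_div_le_one_div_of_le (by positivity)
  apply pow_le_pow_right₀ (by simp [Nat.cast_nonneg] : (1:ℝ) ≤ (m:ℝ)+1) (by omega)

theorem stmt14 (n : ℕ) (hn : 1 ≤ n) (c : ℝ) (hc : 0 < c) :
    ∃ C : ℝ, 0 < C ∧ ∀ j r : ℕ, 2 ≤ j → 1 ≤ r →
      Summable (fun m : ℕ =>
        ((m + 1 : ℝ)) ^ (-(1/2) : ℝ) *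
        (Finset.Icc 0 (n * r ^ 2)).sup' (Finset.nonempty_Icc.mpr (Nat.zero_le _))
          (fun s : ℕ => Real.exp (-(c * 4 ^ j * r ^ 2) / ((m + 1 + s : ℕ) : ℝ)) /
            ((m + 1 + s : ℕ) : ℝ) ^ ((n : ℝ) + 1/2))) ∧
      (∑' m : ℕ,
        ((m + 1 : ℝ)) ^ (-(1/2) : ℝ) *
        (Finset.Icc 0 (n * r ^ 2)).sup' (Finset.nonempty_Icc.mpr (Nat.zero_le _))
          (fun s : ℕ => Real.exp (-(c * 4 ^ j * r ^ 2) / ((m + 1 + s : ℕ) : ℝ)) /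
            ((m + 1 + s : ℕ) : ℝ) ^ ((n : ℝ) + 1/2))) ≤
        C / ((4 : ℝ) ^ (j * n) * (r : ℝ) ^ (2 * n)) := by
  set p : ℝ := (n:ℝ) + 1/2 with hp
  set E : ℝ := 1 + ((n:ℝ)+1) ^ (n+1) with hE
  have hE0 : 0 < E := by positivity
  set B : ℝ := 1 + 1/(16*c) with hB
  have hB1 : 1 ≤ B := by
    rw [hB]
    have : 0 < 1/(16*c) := by positivity
    linarith
  have hn0 : (0:ℝ) < n := by exact_mod_cast hn
  refine ⟨(2 * E * Real.sqrt B + 1/(n:ℝ)) / c^n, by positivity, ?_⟩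
  intro j r hj hr
  set T : ℝ := c * 4 ^ j * (r:ℝ) ^ 2 with hT
  have hr1 : (1:ℝ) ≤ (r:ℝ) := by exact_mod_cast hr
  have h4j : (16:ℝ) ≤ 4 ^ j := by
    calc (16:ℝ) = 4 ^ 2 := by norm_num
    _ ≤ 4 ^ j := by apply pow_le_pow_right₀ (by norm_num) hj
  have hT16 : 16 * c ≤ T := by
    have h1 : c * 16 * 1 ≤ c * 4^j * (r:ℝ)^2 := by
      apply mul_le_mul (mul_le_mul_of_nonneg_left h4j hc.le) (by nlinarith) (by norm_num)
      positivity
    linarith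
  have hT0 : 0 < T := by positivity
  set M : ℕ := ⌈T⌉₊ with hM
  have hM1 : 1 ≤ M := Nat.one_le_iff_ne_zero.mpr (by
    simp only [hM, ne_eq, Nat.ceil_eq_zero, not_le]; exact hT0)
  have hTM : T ≤ (M:ℝ) := Nat.le_ceil T
  have hMT1 : (M:ℝ) < T + 1 := Nat.ceil_lt_add_one hT0.le
  -- the summand
  set F : ℕ → ℝ := fun m =>
        ((m + 1 : ℝ)) ^ (-(1/2) : ℝ) *
        (Finset.Icc 0 (n * r ^ 2)).sup' (Finset.nonempty_Icc.mpr (Nat.zero_le _))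
          (fun s : ℕ => Real.exp (-(c * 4 ^ j * (r:ℝ) ^ 2) / ((m + 1 + s : ℕ) : ℝ)) /
            ((m + 1 + s : ℕ) : ℝ) ^ ((n : ℝ) + 1/2)) with hF
  have hxpos : ∀ m s : ℕ, (1:ℝ) ≤ ((m + 1 + s : ℕ) : ℝ) := by
    intro m s
    have h : 1 ≤ m + 1 + s := by omega
    exact_mod_cast h
  have hterm_nonneg : ∀ m s : ℕ, 0 ≤ Real.exp (-(c * 4 ^ j * (r:ℝ) ^ 2) / ((m + 1 + s : ℕ) : ℝ)) /
            ((m + 1 + s : ℕ) : ℝ) ^ ((n : ℝ) + 1/2) := by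
    intro m s
    have := hxpos m s
    positivity
  have hFnn : ∀ m, 0 ≤ F m := by
    intro m
    apply mul_nonneg (by positivity)
    have h0 : (0:ℕ) ∈ Finset.Icc 0 (n * r ^ 2) := Finset.mem_Icc.mpr ⟨le_refl 0, Nat.zero_le _⟩
    apply le_trans (hterm_nonneg m 0)
    exact Finset.le_sup' (f := fun s : ℕ => Real.exp (-(c * 4 ^ j * (r:ℝ) ^ 2) / ((m + 1 + s : ℕ) : ℝ)) /
            ((m + 1 + s : ℕ) : ℝ) ^ ((n : ℝ) + 1/2)) h0
  -- pointwise bound on each sup' element, version 1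
  have hsup1 : ∀ m : ℕ, (Finset.Icc 0 (n * r ^ 2)).sup' (Finset.nonempty_Icc.mpr (Nat.zero_le _))
          (fun s : ℕ => Real.exp (-(c * 4 ^ j * (r:ℝ) ^ 2) / ((m + 1 + s : ℕ) : ℝ)) /
            ((m + 1 + s : ℕ) : ℝ) ^ ((n : ℝ) + 1/2)) ≤ E / T ^ p := by
    intro m
    apply Finset.sup'_le
    intro s _
    set x : ℝ := ((m + 1 + s : ℕ) : ℝ) with hx
    have hx1 : (1:ℝ) ≤ x := hxpos m s
    have hx0 : (0:ℝ) < x := by linarith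
    have hy0 : 0 < T / x := by positivity
    have hTp : 0 < T ^ p := Real.rpow_pos_of_pos hT0 p
    have hxp : 0 < x ^ p := Real.rpow_pos_of_pos hx0 p
    have hkey := aux_exp_rpow n (T/x) hy0
    rw [Real.div_rpow hT0.le hx0.le] at hkey
    have hexp : -(c * 4 ^ j * (r:ℝ) ^ 2) / x = -(T/x) := by rw [hT, neg_div]
    rw [hexp, div_le_div_iff₀ hxp hTp]
    have h2 := mul_le_mul_of_nonneg_right hkey hxp.le
    rw [mul_assoc, div_mul_cancel₀ _ hxp.ne'] at h2
    exact h2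
  -- pointwise bound, version 2
  have hsup2 : ∀ m : ℕ, (Finset.Icc 0 (n * r ^ 2)).sup' (Finset.nonempty_Icc.mpr (Nat.zero_le _))
          (fun s : ℕ => Real.exp (-(c * 4 ^ j * (r:ℝ) ^ 2) / ((m + 1 + s : ℕ) : ℝ)) /
            ((m + 1 + s : ℕ) : ℝ) ^ ((n : ℝ) + 1/2)) ≤ 1 / ((m:ℝ)+1) ^ p := by
    intro m
    apply Finset.sup'_le
    intro s _
    set x : ℝ := ((m + 1 + s : ℕ) : ℝ) with hx
    have hx1 : (1:ℝ) ≤ x := hxpos m s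
    have hx0 : (0:ℝ) < x := by linarith
    have hu0 : (0:ℝ) < (m:ℝ)+1 := by positivity
    have hux : (m:ℝ)+1 ≤ x := by rw [hx]; push_cast; linarith [Nat.cast_nonneg (α := ℝ) s]
    have h1 : Real.exp (-(c * 4 ^ j * (r:ℝ) ^ 2) / x) ≤ 1 := by
      apply Real.exp_le_one_iff.mpr
      rw [neg_div]
      simp only [neg_nonpos]
      positivity
    have hxple : ((m:ℝ)+1) ^ p ≤ x ^ p := Real.rpow_le_rpow hu0.le hux (by positivity)
    exact div_le_div₀ zero_le_one h1 (Real.rpow_pos_of_pos hu0 p) hxple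
  -- combined bound by g₁ + g₂
  set g₁ : ℕ → ℝ := fun m => if m < M then E / T ^ p * ((m:ℝ)+1) ^ (-(1/2):ℝ) else 0 with hg₁
  set g₂ : ℕ → ℝ := fun m => if m < M then 0 else 1/((m:ℝ)+1)^(n+1) with hg₂
  have hcast : ∀ m : ℕ, ((m + 1 : ℝ)) = ((m:ℝ)+1) := fun m => rfl
  have hF1 : ∀ m, F m ≤ ((m:ℝ)+1) ^ (-(1/2):ℝ) * (E / T ^ p) := by
    intro m
    exact mul_le_mul_of_nonneg_left (hsup1 m) (by positivity)
  have hF2 : ∀ m, F m ≤ 1/((m:ℝ)+1)^(n+1) := by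
    intro m
    have hu0 : (0:ℝ) < (m:ℝ)+1 := by positivity
    have h := mul_le_mul_of_nonneg_left (hsup2 m) (by positivity : (0:ℝ) ≤ ((m:ℝ)+1) ^ (-(1/2):ℝ))
    refine h.trans_eq ?_
    have e1 : 1 / ((m:ℝ)+1) ^ p = ((m:ℝ)+1) ^ (-p) := by
      rw [Real.rpow_neg hu0.le]
      exact one_div _
    rw [e1, ← Real.rpow_add hu0]
    have e2 : (-(1/2) : ℝ) + -p = -(((n+1:ℕ)):ℝ) := by rw [hp]; push_cast; ring
    rw [e2, Real.rpow_neg hu0.le, Real.rpow_natCast]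
    exact (one_div _).symm
  have hFg : ∀ m, F m ≤ g₁ m + g₂ m := by
    intro m
    by_cases h : m < M
    · simp only [hg₁, hg₂, if_pos h, add_zero]
      exact (hF1 m).trans_eq (mul_comm _ _)
    · simp only [hg₁, hg₂, if_neg h, zero_add]
      exact hF2 m
  -- summability
  have hg₁sum : Summable g₁ := by
    apply summable_of_ne_finset_zero (s := Finset.range M)
    intro m hm
    simp only [hg₁, if_neg (fun h => hm (Finset.mem_range.mpr h))]
  have hg₂sum : Summable g₂ := by
    apply Summable.of_nonneg_of_le (fun m => ?_) (fun m => ?_) (aux_summable n hn)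
    · by_cases h : m < M <;> simp [hg₂, h] <;> positivity
    · by_cases h : m < M <;> simp [hg₂, h] <;> positivity
  have hFsum : Summable F := Summable.of_nonneg_of_le hFnn hFg (hg₁sum.add hg₂sum)
  constructor
  · exact hFsum
  -- the tsum bound
  have hsplit : ∑' m, F m ≤ (∑' m, g₁ m) + ∑' m, g₂ m := by
    rw [← Summable.tsum_add hg₁sum hg₂sum]
    exact Summable.tsum_le_tsum hFg hFsum (hg₁sum.add hg₂sum)
  have hTn0 : (0:ℝ) < T ^ n := by positivity
  -- bound for g₁
  have hg₁bound : (∑' m, g₁ m) ≤ 2 * E * Real.sqrt B / T ^ n := by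
    have h1 : ∑' m, g₁ m = ∑ m ∈ Finset.range M, g₁ m := by
      apply tsum_eq_sum
      intro m hm
      simp only [hg₁, if_neg (fun h => hm (Finset.mem_range.mpr h))]
    have h2 : ∑ m ∈ Finset.range M, g₁ m = E / T ^ p * ∑ m ∈ Finset.range M, ((m:ℝ)+1) ^ (-(1/2):ℝ) := by
      rw [Finset.mul_sum]
      apply Finset.sum_congr rfl
      intro m hm
      rw [hg₁]
      simp only [if_pos (Finset.mem_range.mp hm)]
    have h3 := aux_sqrt_sum M
    have hTp : 0 < T ^ p := Real.rpow_pos_of_pos hT0 p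
    have h4 : Real.sqrt M ≤ Real.sqrt B * Real.sqrt T := by
      rw [← Real.sqrt_mul (by linarith) T]
      apply Real.sqrt_le_sqrt
      have : T + 1 ≤ B * T := by
        rw [hB]
        have h16 : 1 ≤ (1/(16*c)) * T := by
          rw [one_div, inv_mul_eq_div, le_div_iff₀ (by positivity : (0:ℝ) < 16*c)]
          linarith
        nlinarith
      linarith
    have h5 : E / T ^ p * (2 * (Real.sqrt B * Real.sqrt T)) = 2 * E * Real.sqrt B * (Real.sqrt T / T ^ p) := by
      ring
    have h6 : Real.sqrt T / T ^ p = 1 / T ^ n := by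
      rw [Real.sqrt_eq_rpow, div_eq_div_iff hTp.ne' hTn0.ne', one_mul,
        ← Real.rpow_natCast T n, ← Real.rpow_add hT0]
      congr 1
      rw [hp]; push_cast; ring
    calc ∑' m, g₁ m = E / T ^ p * ∑ m ∈ Finset.range M, ((m:ℝ)+1) ^ (-(1/2):ℝ) := by rw [h1, h2]
    _ ≤ E / T ^ p * (2 * Real.sqrt M) := by
        apply mul_le_mul_of_nonneg_left (by linarith) (by positivity)
    _ ≤ E / T ^ p * (2 * (Real.sqrt B * Real.sqrt T)) := by
        apply mul_le_mul_of_nonneg_left (by linarith) (by positivity)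
    _ = 2 * E * Real.sqrt B * (Real.sqrt T / T ^ p) := h5
    _ = 2 * E * Real.sqrt B / T ^ n := by rw [h6]; ring
  -- bound for g₂
  have hg₂bound : (∑' m, g₂ m) ≤ (1/(n:ℝ)) / T ^ n := by
    have h1 : ∀ N, ∑ m ∈ Finset.range N, g₂ m ≤ (1/(n:ℝ)) * (1/(M:ℝ)^n) := fun N => aux_tail n hn M hM1 N
    have h2 : ∑' m, g₂ m ≤ (1/(n:ℝ)) * (1/(M:ℝ)^n) := Summable.tsum_le_of_sum_range_le hg₂sum h1
    have h3 : 1/(M:ℝ)^n ≤ 1/T^n := by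
      apply one_div_le_one_div_of_le hTn0
      exact pow_le_pow_left₀ hT0.le hTM n
    calc ∑' m, g₂ m ≤ (1/(n:ℝ)) * (1/(M:ℝ)^n) := h2
    _ ≤ (1/(n:ℝ)) * (1/T^n) := by apply mul_le_mul_of_nonneg_left h3 (by positivity)
    _ = (1/(n:ℝ)) / T ^ n := by ring
  -- final
  have hTfinal : T ^ n = c ^ n * ((4:ℝ) ^ (j*n) * (r:ℝ) ^ (2*n)) := by
    rw [hT, mul_pow, mul_pow, ← pow_mul, ← pow_mul]
    ring_nf
  have hfin : (2 * E * Real.sqrt B + 1/(n:ℝ)) / c^n / ((4:ℝ) ^ (j*n) * (r:ℝ) ^ (2*n))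
      = (2 * E * Real.sqrt B + 1/(n:ℝ)) / T ^ n := by
    rw [div_div, hTfinal]
  calc ∑' m, F m ≤ (∑' m, g₁ m) + ∑' m, g₂ m := hsplit
  _ ≤ 2 * E * Real.sqrt B / T ^ n + (1/(n:ℝ)) / T ^ n := add_le_add hg₁bound hg₂bound
  _ = (2 * E * Real.sqrt B + 1/(n:ℝ)) / T ^ n := by ring
  _ = (2 * E * Real.sqrt B + 1/(n:ℝ)) / c^n / ((4:ℝ) ^ (j*n) * (r:ℝ) ^ (2*n)) := hfin.symm
end

section
/- Let P be a self-adjoint operator on a Hilbert space H with spectrum contained in (a, 1] for some a > -1, and let β > 0. Then there is C > 0 such that for all f ∈ H, ∑_{l≥1} l^{2β-1}·‖(I-P)^β P^{l-1} f‖² ≤ C·‖f‖². -/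
private lemma stmt17_geom_sum_le {t : ℝ} (h0 : 0 ≤ t) (h1 : t < 1) (N : ℕ) :
    ∑ l ∈ Finset.range N, t ^ l ≤ (1 - t)⁻¹ := by
  have h1t : 0 < 1 - t := by linarith
  rw [inv_eq_one_div, le_div_iff₀ h1t]
  have h := geom_sum_mul t N
  have htN : 0 ≤ t ^ N := pow_nonneg h0 N
  nlinarith [h]


open Real in
private lemma stmt17_caseA {s t : ℝ} (hs : 0 < s) (h0 : 0 ≤ t) (h1 : t < 1) (N : ℕ) :
    ∑ l ∈ Finset.range N, ((l : ℝ) + 1) ^ s * (1 - t) ^ (s + 1) * t ^ l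
      ≤ (2 * s) ^ s * (2 * Real.exp 1 * Real.exp 1) := by
  set u : ℝ := (1 - t) / 2 with hu_def
  have hu : 0 < u := by simp only [hu_def]; linarith
  have h1t : 0 < 1 - t := by linarith
  have hterm : ∀ l : ℕ, ((l : ℝ) + 1) ^ s * (1 - t) ^ (s + 1) * t ^ l
      ≤ (2 * s) ^ s * exp 1 * ((1 - t) * exp (-u) ^ l) := by
    intro l
    have hl1 : (0 : ℝ) < (l : ℝ) + 1 := by positivity
    set z : ℝ := u * ((l : ℝ) + 1) with hz_def
    have hz : 0 < z := by positivity
    have hzs : 0 < z / s := by positivity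
    have key1 : ((l : ℝ) + 1) ^ s ≤ (s / u) ^ s * exp z := by
      have h1 : ((l : ℝ) + 1) = (z / s) * (s / u) := by
        field_simp [hz_def]
        rw [hz_def]; ring
      have h2 : (z / s) ^ s ≤ exp z := by
        rw [rpow_def_of_pos hzs]
        apply exp_le_exp.mpr
        have hlog := log_le_sub_one_of_pos hzs
        calc log (z / s) * s ≤ (z / s - 1) * s := by
              exact mul_le_mul_of_nonneg_right hlog hs.le
          _ ≤ z := by field_simp; nlinarith
      calc ((l : ℝ) + 1) ^ s = (z / s) ^ s * (s / u) ^ s := by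
            rw [h1, mul_rpow hzs.le (by positivity)]
        _ ≤ exp z * (s / u) ^ s :=
            mul_le_mul_of_nonneg_right h2 (rpow_nonneg (by positivity) s)
        _ = (s / u) ^ s * exp z := by ring
    have ht2u : t ≤ exp (-(2 * u)) := by
      have h := Real.add_one_le_exp (-(2 * u))
      have he : -(2 * u) + 1 = t := by rw [hu_def]; ring
      linarith [h, he ▸ h]
    -- assemble
    have htl : t ^ l ≤ exp (-(2 * u)) ^ l := pow_le_pow_left₀ h0 ht2u l
    have hsu : (s / u) ^ s * (1 - t) ^ (s + 1) = (2 * s) ^ s * (1 - t) := by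
      rw [rpow_add h1t s 1, rpow_one]
      have : (s / u) ^ s * (1 - t) ^ s = (2 * s) ^ s := by
        rw [← mul_rpow (by positivity) h1t.le]
        congr 1
        rw [hu_def]; field_simp
      calc (s / u) ^ s * ((1 - t) ^ s * (1 - t))
            = ((s / u) ^ s * (1 - t) ^ s) * (1 - t) := by ring
        _ = (2 * s) ^ s * (1 - t) := by rw [this]
    have hez : exp z * exp (-(2 * u)) ^ l = exp u * exp (-u) ^ l := by
      rw [← exp_nat_mul, ← exp_nat_mul, ← exp_add, ← exp_add, hz_def]
      congr 1; push_cast; ring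
    have hexpu : exp u ≤ exp 1 := exp_le_exp.mpr (by rw [hu_def]; linarith)
    calc ((l : ℝ) + 1) ^ s * (1 - t) ^ (s + 1) * t ^ l
        ≤ ((s / u) ^ s * exp z) * (1 - t) ^ (s + 1) * (exp (-(2 * u)) ^ l) := by
          apply mul_le_mul
          · exact mul_le_mul_of_nonneg_right key1 (rpow_nonneg h1t.le _)
          · exact htl
          · exact pow_nonneg h0 l
          · positivity
      _ = ((s / u) ^ s * (1 - t) ^ (s + 1)) * (exp z * exp (-(2 * u)) ^ l) := by ring
      _ = ((2 * s) ^ s * (1 - t)) * (exp u * exp (-u) ^ l) := by rw [hsu, hez]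
      _ ≤ ((2 * s) ^ s * (1 - t)) * (exp 1 * exp (-u) ^ l) := by
          apply mul_le_mul_of_nonneg_left
          · exact mul_le_mul_of_nonneg_right hexpu (pow_nonneg (exp_pos _).le l)
          · positivity
      _ = (2 * s) ^ s * exp 1 * ((1 - t) * exp (-u) ^ l) := by ring
  calc ∑ l ∈ Finset.range N, ((l : ℝ) + 1) ^ s * (1 - t) ^ (s + 1) * t ^ l
      ≤ ∑ l ∈ Finset.range N, (2 * s) ^ s * exp 1 * ((1 - t) * exp (-u) ^ l) :=
        Finset.sum_le_sum fun l _ => hterm l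
    _ = (2 * s) ^ s * exp 1 * ((1 - t) * ∑ l ∈ Finset.range N, exp (-u) ^ l) := by
        rw [← Finset.mul_sum, ← Finset.mul_sum]
    _ ≤ (2 * s) ^ s * exp 1 * ((1 - t) * (1 - exp (-u))⁻¹) := by
        apply mul_le_mul_of_nonneg_left
        · apply mul_le_mul_of_nonneg_left
          · exact stmt17_geom_sum_le (exp_pos _).le
              (exp_lt_one_iff.mpr (by linarith)) N
          · exact h1t.le
        · positivity
    _ ≤ (2 * s) ^ s * (2 * Real.exp 1 * Real.exp 1) := by
        have h1 : u * exp (-u) ≤ 1 - exp (-u) := by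
          have hexp := Real.add_one_le_exp u
          have hh : exp (-u) = (exp u)⁻¹ := exp_neg u
          have hpu : 0 < exp u := exp_pos u
          rw [hh]
          rw [← sub_nonneg]
          have key : 1 - (exp u)⁻¹ - u * (exp u)⁻¹ = (exp u - 1 - u) * (exp u)⁻¹ := by
            field_simp
          rw [key]
          apply mul_nonneg (by linarith) (by positivity)
        have hinv : (1 - exp (-u))⁻¹ ≤ exp u / u := by
          have hpos : 0 < u * exp (-u) := by positivity
          calc (1 - exp (-u))⁻¹ ≤ (u * exp (-u))⁻¹ := by
                apply inv_anti₀ hpos h1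
            _ = exp u / u := by
                rw [mul_inv, exp_neg, inv_inv]; ring
        have hfin : (1 - t) * (1 - exp (-u))⁻¹ ≤ 2 * exp 1 := by
          have h2 : (1 - t) * (1 - exp (-u))⁻¹ ≤ (1 - t) * (exp u / u) :=
            mul_le_mul_of_nonneg_left hinv h1t.le
          have h3 : (1 - t) * (exp u / u) = 2 * exp u := by
            rw [hu_def]; field_simp
          have h4 : exp u ≤ exp 1 := exp_le_exp.mpr (by rw [hu_def]; linarith)
          calc (1 - t) * (1 - exp (-u))⁻¹ ≤ 2 * exp u := by rw [← h3]; exact h2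
            _ ≤ 2 * exp 1 := by linarith
        calc (2 * s) ^ s * exp 1 * ((1 - t) * (1 - exp (-u))⁻¹)
            ≤ (2 * s) ^ s * exp 1 * (2 * exp 1) := by
              apply mul_le_mul_of_nonneg_left hfin (by positivity)
          _ = (2 * s) ^ s * (2 * Real.exp 1 * Real.exp 1) := by ring

open Real Finset in
private lemma stmt17_caseB {s t : ℝ} (hs1 : -1 < s) (hs0 : s ≤ 0) (h0 : 0 ≤ t)
    (h1 : t < 1) (N : ℕ) :
    ∑ l ∈ Finset.range N, ((l : ℝ) + 1) ^ s * (1 - t) ^ (s + 1) * t ^ l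
      ≤ (s + 1)⁻¹ + 1 := by
  have h1t : 0 < 1 - t := by linarith
  set p : ℝ := s + 1 with hp_def
  have hp : 0 < p := by simp only [hp_def]; linarith
  have hp1 : p ≤ 1 := by simp only [hp_def]; linarith
  rw [← Finset.sum_filter_add_sum_filter_not (Finset.range N)
    (fun l : ℕ => ((l : ℝ) + 1) * (1 - t) < 1)]
  have part2 : ∑ l ∈ (Finset.range N).filter (fun l : ℕ => ¬ (((l : ℝ) + 1) * (1 - t) < 1)),
      ((l : ℝ) + 1) ^ s * (1 - t) ^ p * t ^ l ≤ 1 := by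
    calc ∑ l ∈ (Finset.range N).filter (fun l : ℕ => ¬ (((l : ℝ) + 1) * (1 - t) < 1)),
          ((l : ℝ) + 1) ^ s * (1 - t) ^ p * t ^ l
        ≤ ∑ l ∈ (Finset.range N).filter (fun l : ℕ => ¬ (((l : ℝ) + 1) * (1 - t) < 1)),
          (1 - t) * t ^ l := by
          apply Finset.sum_le_sum
          intro l hl
          simp only [Finset.mem_filter, not_lt] at hl
          have hbase : 1 ≤ ((l : ℝ) + 1) * (1 - t) := hl.2
          have hone : ((l : ℝ) + 1) ^ s * (1 - t) ^ s ≤ 1 := by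
            rw [← mul_rpow (by positivity) h1t.le]
            exact rpow_le_one_of_one_le_of_nonpos hbase hs0
          have hsplit : (1 - t) ^ p = (1 - t) ^ s * (1 - t) := by
            rw [hp_def, rpow_add h1t, rpow_one]
          calc ((l : ℝ) + 1) ^ s * (1 - t) ^ p * t ^ l
              = (((l : ℝ) + 1) ^ s * (1 - t) ^ s) * ((1 - t) * t ^ l) := by
                rw [hsplit]; ring
            _ ≤ 1 * ((1 - t) * t ^ l) := by
                apply mul_le_mul_of_nonneg_right hone
                  (mul_nonneg h1t.le (pow_nonneg h0 l))
            _ = (1 - t) * t ^ l := one_mul _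
      _ ≤ ∑ l ∈ Finset.range N, (1 - t) * t ^ l := by
          apply Finset.sum_le_sum_of_subset_of_nonneg (Finset.filter_subset _ _)
          intro l _ _
          exact mul_nonneg h1t.le (pow_nonneg h0 l)
      _ = (1 - t) * ∑ l ∈ Finset.range N, t ^ l := by rw [Finset.mul_sum]
      _ ≤ (1 - t) * (1 - t)⁻¹ :=
          mul_le_mul_of_nonneg_left (stmt17_geom_sum_le h0 h1 N) h1t.le
      _ = 1 := mul_inv_cancel₀ (ne_of_gt h1t)
  have part1 : ∑ l ∈ (Finset.range N).filter (fun l : ℕ => ((l : ℝ) + 1) * (1 - t) < 1),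
      ((l : ℝ) + 1) ^ s * (1 - t) ^ p * t ^ l ≤ p⁻¹ := by
    set M : ℕ := ⌊(1 - t)⁻¹⌋₊ with hM_def
    have tele : ∀ l : ℕ, ((l : ℝ) + 1) ^ s ≤ (((l : ℝ) + 1) ^ p - (l : ℝ) ^ p) / p := by
      intro l
      set k : ℝ := (l : ℝ) + 1 with hk_def
      have hk1 : 1 ≤ k := by
        have := Nat.cast_nonneg (α := ℝ) l; simp only [hk_def]; linarith
      have hk0 : 0 < k := by linarith
      have hσ : (-1 : ℝ) ≤ -(1 / k) := by
        rw [neg_le_neg_iff, div_le_one hk0]; exact hk1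
      have hbern : (1 + -(1 / k)) ^ p ≤ 1 + p * (-(1 / k)) :=
        rpow_one_add_le_one_add_mul_self hσ hp.le hp1
      have hnn : (0:ℝ) ≤ 1 + -(1 / k) := by
        rw [← sub_eq_add_neg, sub_nonneg, div_le_one hk0]; exact hk1
      have hkl : k * (1 + -(1 / k)) = (l : ℝ) := by
        have hkne : k ≠ 0 := ne_of_gt hk0
        field_simp [hk_def]
        rw [hk_def]; ring
      have hsplit : ((l : ℝ)) ^ p = k ^ p * (1 + -(1 / k)) ^ p := by
        rw [← mul_rpow hk0.le hnn, hkl]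
      have hkp : k ^ p * (1 / k) = k ^ s := by
        rw [hp_def, rpow_add hk0, rpow_one]; field_simp
      have hmain : ((l : ℝ)) ^ p ≤ k ^ p - p * k ^ s := by
        calc ((l : ℝ)) ^ p = k ^ p * (1 + -(1 / k)) ^ p := hsplit
          _ ≤ k ^ p * (1 + p * (-(1 / k))) :=
              mul_le_mul_of_nonneg_left hbern (rpow_nonneg hk0.le p)
          _ = k ^ p - p * (k ^ p * (1 / k)) := by ring
          _ = k ^ p - p * k ^ s := by rw [hkp]
      rw [le_div_iff₀ hp]
      linarith
    calc ∑ l ∈ (Finset.range N).filter (fun l : ℕ => ((l : ℝ) + 1) * (1 - t) < 1),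
          ((l : ℝ) + 1) ^ s * (1 - t) ^ p * t ^ l
        ≤ ∑ l ∈ (Finset.range N).filter (fun l : ℕ => ((l : ℝ) + 1) * (1 - t) < 1),
          (1 - t) ^ p * ((l : ℝ) + 1) ^ s := by
          apply Finset.sum_le_sum
          intro l hl
          have htl : t ^ l ≤ 1 := pow_le_one₀ h0 h1.le
          calc ((l : ℝ) + 1) ^ s * (1 - t) ^ p * t ^ l
              ≤ ((l : ℝ) + 1) ^ s * (1 - t) ^ p * 1 := by
                apply mul_le_mul_of_nonneg_left htl
                exact mul_nonneg (rpow_nonneg (by positivity) s) (rpow_nonneg h1t.le p)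
            _ = (1 - t) ^ p * ((l : ℝ) + 1) ^ s := by ring
      _ ≤ ∑ l ∈ Finset.range M, (1 - t) ^ p * ((l : ℝ) + 1) ^ s := by
          apply Finset.sum_le_sum_of_subset_of_nonneg
          · intro l hl
            simp only [Finset.mem_filter, Finset.mem_range] at hl ⊢
            have hlt : ((l : ℝ) + 1) < (1 - t)⁻¹ := by
              rw [← lt_div_iff₀ h1t] at hl
              rw [inv_eq_one_div]
              exact hl.2
            have hle : (l + 1 : ℕ) ≤ M := by
              rw [hM_def]
              apply Nat.le_floor
              push_cast
              exact hlt.le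
            omega
          · intro l _ _
            exact mul_nonneg (rpow_nonneg h1t.le p) (rpow_nonneg (by positivity) s)
      _ = (1 - t) ^ p * ∑ l ∈ Finset.range M, (((l : ℝ) + 1) ^ s) := by
          rw [Finset.mul_sum]
      _ ≤ (1 - t) ^ p * ((M : ℝ) ^ p / p) := by
          apply mul_le_mul_of_nonneg_left _ (rpow_nonneg h1t.le p)
          calc ∑ l ∈ Finset.range M, ((l : ℝ) + 1) ^ s
              ≤ ∑ l ∈ Finset.range M, ((((l : ℝ) + 1) ^ p - (l : ℝ) ^ p) / p) :=
                Finset.sum_le_sum fun l _ => tele l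
            _ = (∑ l ∈ Finset.range M, ((((l : ℝ) + 1) ^ p) - ((l : ℝ) ^ p))) / p := by
                rw [Finset.sum_div]
            _ = ((M : ℝ) ^ p - (0 : ℝ) ^ p) / p := by
                have := Finset.sum_range_sub (fun l : ℕ => ((l : ℝ)) ^ p) M
                push_cast at this ⊢
                rw [this]
            _ = (M : ℝ) ^ p / p := by rw [Real.zero_rpow (ne_of_gt hp)]; ring
      _ ≤ p⁻¹ := by
          have hMle : (M : ℝ) ≤ (1 - t)⁻¹ := Nat.floor_le (by positivity)
          have h1tM : (1 - t) * (M : ℝ) ≤ 1 := by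
            calc (1 - t) * (M : ℝ) ≤ (1 - t) * (1 - t)⁻¹ :=
                  mul_le_mul_of_nonneg_left hMle h1t.le
              _ = 1 := mul_inv_cancel₀ (ne_of_gt h1t)
          calc (1 - t) ^ p * ((M : ℝ) ^ p / p)
              = ((1 - t) * (M : ℝ)) ^ p / p := by
                rw [mul_rpow h1t.le (Nat.cast_nonneg M)]; ring
            _ ≤ 1 / p := by
                gcongr
                exact Real.rpow_le_one (by positivity) h1tM hp.le
            _ = p⁻¹ := one_div p
  exact add_le_add part1 part2

private lemma stmt17_scalar (s : ℝ) (hs : -1 < s) :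
    ∃ C : ℝ, 0 < C ∧ ∀ t : ℝ, 0 ≤ t → t ≤ 1 → ∀ N : ℕ,
      ∑ l ∈ Finset.range N, ((l : ℝ) + 1) ^ s * (1 - t) ^ (s + 1) * t ^ l ≤ C := by
  have hsum_one : ∀ N : ℕ,
      ∑ l ∈ Finset.range N, ((l : ℝ) + 1) ^ s * (1 - (1:ℝ)) ^ (s + 1) * (1:ℝ) ^ l = 0 := by
    intro N
    apply Finset.sum_eq_zero
    intro l _
    rw [sub_self, Real.zero_rpow (by linarith)]
    ring
  rcases le_or_gt s 0 with hle | hlt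
  · refine ⟨(s + 1)⁻¹ + 1, ?_, ?_⟩
    · have : 0 < (s + 1)⁻¹ := inv_pos.mpr (by linarith)
      linarith
    · intro t h0 h1 N
      rcases lt_or_eq_of_le h1 with h1' | rfl
      · exact stmt17_caseB hs hle h0 h1' N
      · rw [hsum_one N]
        have : 0 < (s + 1)⁻¹ := inv_pos.mpr (by linarith)
        linarith
  · refine ⟨(2 * s) ^ s * (2 * Real.exp 1 * Real.exp 1), ?_, ?_⟩
    · have h2s : (0:ℝ) < (2 * s) ^ s := Real.rpow_pos_of_pos (by linarith) s
      positivity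
    · intro t h0 h1 N
      rcases lt_or_eq_of_le h1 with h1' | rfl
      · exact stmt17_caseA hlt h0 h1' N
      · rw [hsum_one N]
        have h2s : (0:ℝ) < (2 * s) ^ s := Real.rpow_pos_of_pos (by linarith) s
        positivity

open Real in
theorem stmt17 {H : Type*} [NormedAddCommGroup H] [InnerProductSpace ℂ H] [CompleteSpace H]
    (P : H →L[ℂ] H) (hP : IsSelfAdjoint P) (a : ℝ) (ha : -1 < a)
    (hspec : spectrum ℂ P ⊆ (fun x : ℝ => (x : ℂ)) '' Set.Ioc a 1)
    (β : ℝ) (hβ : 0 < β) :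
    ∃ C : ℝ, 0 < C ∧ ∀ f : H,
      Summable (fun l : ℕ =>
        ((l + 1 : ℝ)) ^ (2 * β - 1) * ‖(cfc (fun x : ℝ => (1 - x) ^ β) P) ((P ^ l) f)‖ ^ 2) ∧
      (∑' l : ℕ,
        ((l + 1 : ℝ)) ^ (2 * β - 1) * ‖(cfc (fun x : ℝ => (1 - x) ^ β) P) ((P ^ l) f)‖ ^ 2) ≤
        C * ‖f‖ ^ 2 := by
  obtain ⟨C₀, hC₀, hkey₀⟩ := stmt17_scalar (2 * β - 1) (by linarith)
  have hkey : ∀ t : ℝ, 0 ≤ t → t ≤ 1 → ∀ N : ℕ,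
      ∑ l ∈ Finset.range N, ((l : ℝ) + 1) ^ (2 * β - 1) * (1 - t) ^ (2 * β) * t ^ l ≤ C₀ := by
    have h2β : 2 * β - 1 + 1 = 2 * β := by ring
    simpa only [h2β] using hkey₀
  have ha0 : (0:ℝ) < 1 + a := by linarith
  have hEpos : (0:ℝ) < (1 + a) ^ (2 * β) := Real.rpow_pos_of_pos ha0 _
  set D : ℝ := ((1 + a) ^ (2 * β))⁻¹ with hD_def
  have hDpos : 0 < D := inv_pos.mpr hEpos
  refine ⟨C₀ * D, by positivity, fun f => ?_⟩
  -- spectrum of P over ℝ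
  have hspecR : ∀ x ∈ spectrum ℝ P, a < x ∧ x ≤ 1 := by
    intro x hx
    have hx' : (algebraMap ℝ ℂ x) ∈ spectrum ℂ P := spectrum.algebraMap_mem ℂ hx
    obtain ⟨y, hy, hxy⟩ := hspec hx'
    have hxy' : (y : ℂ) = (x : ℂ) := by simpa using hxy
    have hyx : y = x := by exact_mod_cast hxy'
    exact hyx ▸ ⟨hy.1, hy.2⟩
  -- continuity
  have hgc : Continuous (fun x : ℝ => (1 - x) ^ β) :=
    (Real.continuous_rpow_const hβ.le).comp (continuous_const.sub continuous_id)
  set g : ℝ → ℝ := fun x : ℝ => (1 - x) ^ β with hg_def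
  set q : ℕ → ℝ → ℝ := fun l x => ((l : ℝ) + 1) ^ (2 * β - 1) * (g x * x ^ l) ^ 2
    with hq_def
  have hqc : ∀ l : ℕ, Continuous (q l) := fun l =>
    continuous_const.mul ((hgc.mul (continuous_pow l)).pow 2)
  set T : ℕ → (H →L[ℂ] H) := fun l => cfc (fun x : ℝ => g x * x ^ l) P with hT_def
  have hTc : ∀ l : ℕ, Continuous (fun x : ℝ => g x * x ^ l) := fun l =>
    hgc.mul (continuous_pow l)
  -- pointwise bound on the spectrum
  have hptwise : ∀ N : ℕ, ∀ x ∈ spectrum ℝ P,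
      ‖∑ l ∈ Finset.range N, q l x‖ ≤ C₀ * D := by
    intro N x hx
    obtain ⟨hax, hx1⟩ := hspecR x hx
    have h1x : (0:ℝ) ≤ 1 - x := by linarith
    have h1x' : (0:ℝ) < 1 + x := by linarith
    set t : ℝ := x ^ 2 with ht_def
    have ht0 : 0 ≤ t := sq_nonneg x
    have ht1 : t ≤ 1 := by nlinarith
    have hg2 : (g x) ^ 2 = (1 - x) ^ (2 * β) := by
      rw [hg_def]
      rw [← Real.rpow_natCast ((1 - x) ^ β) 2, ← Real.rpow_mul h1x]
      norm_num [mul_comm]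
    have hmul : (1 - x) ^ (2 * β) * (1 + x) ^ (2 * β) = (1 - t) ^ (2 * β) := by
      rw [← Real.mul_rpow h1x h1x'.le]
      congr 1
      rw [ht_def]; ring
    have hbd : (1 - x) ^ (2 * β) ≤ D * (1 - t) ^ (2 * β) := by
      have hmono : (1 + a) ^ (2 * β) ≤ (1 + x) ^ (2 * β) :=
        Real.rpow_le_rpow ha0.le (by linarith) (by positivity)
      have hA : (0:ℝ) ≤ (1 - x) ^ (2 * β) := Real.rpow_nonneg h1x _
      have h2 : (1 - x) ^ (2 * β) * (1 + a) ^ (2 * β) ≤ (1 - t) ^ (2 * β) := by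
        calc (1 - x) ^ (2 * β) * (1 + a) ^ (2 * β)
            ≤ (1 - x) ^ (2 * β) * (1 + x) ^ (2 * β) :=
              mul_le_mul_of_nonneg_left hmono hA
          _ = (1 - t) ^ (2 * β) := hmul
      have hDt : D * (1 - t) ^ (2 * β) = (1 - t) ^ (2 * β) / (1 + a) ^ (2 * β) := by
        rw [hD_def]; ring
      rw [hDt, le_div_iff₀ hEpos]
      exact h2
    have hterm : ∀ l : ℕ, q l x ≤ D * (((l : ℝ) + 1) ^ (2 * β - 1) * (1 - t) ^ (2 * β) * t ^ l) := by
      intro l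
      have hsq : (g x * x ^ l) ^ 2 = (g x) ^ 2 * t ^ l := by
        rw [mul_pow, ht_def, ← pow_mul, ← pow_mul, mul_comm l 2]
      have hwl : (0:ℝ) ≤ ((l : ℝ) + 1) ^ (2 * β - 1) := Real.rpow_nonneg (by positivity) _
      have htl : (0:ℝ) ≤ t ^ l := pow_nonneg ht0 l
      calc q l x = ((l : ℝ) + 1) ^ (2 * β - 1) * ((1 - x) ^ (2 * β) * t ^ l) := by
            simp only [hq_def]; rw [hsq, hg2]; try ring
        _ ≤ ((l : ℝ) + 1) ^ (2 * β - 1) * ((D * (1 - t) ^ (2 * β)) * t ^ l) := by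
            apply mul_le_mul_of_nonneg_left _ hwl
            exact mul_le_mul_of_nonneg_right hbd htl
        _ = D * (((l : ℝ) + 1) ^ (2 * β - 1) * (1 - t) ^ (2 * β) * t ^ l) := by ring
    have hsum_nonneg : 0 ≤ ∑ l ∈ Finset.range N, q l x := by
      apply Finset.sum_nonneg
      intro l _
      rw [hq_def]
      exact mul_nonneg (Real.rpow_nonneg (by positivity) _) (sq_nonneg _)
    rw [Real.norm_eq_abs, abs_of_nonneg hsum_nonneg]
    calc ∑ l ∈ Finset.range N, q l x
        ≤ ∑ l ∈ Finset.range N, D * (((l : ℝ) + 1) ^ (2 * β - 1) * (1 - t) ^ (2 * β) * t ^ l) :=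
          Finset.sum_le_sum fun l _ => hterm l
      _ = D * ∑ l ∈ Finset.range N, ((l : ℝ) + 1) ^ (2 * β - 1) * (1 - t) ^ (2 * β) * t ^ l := by
          rw [Finset.mul_sum]
      _ ≤ D * C₀ := mul_le_mul_of_nonneg_left (hkey t ht0 ht1 N) hDpos.le
      _ = C₀ * D := mul_comm _ _
  -- operator decomposition
  have hdecomp : ∀ N : ℕ, cfc (fun x : ℝ => ∑ l ∈ Finset.range N, q l x) P
      = ∑ l ∈ Finset.range N, ((l : ℝ) + 1) ^ (2 * β - 1) • (T l * T l) := by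
    intro N
    have hfun : (fun x : ℝ => ∑ l ∈ Finset.range N, q l x) = ∑ l ∈ Finset.range N, q l := by
      ext x; simp [Finset.sum_apply]
    rw [hfun, cfc_sum q P (Finset.range N) (fun l _ => (hqc l).continuousOn)]
    apply Finset.sum_congr rfl
    intro l _
    have h1 : cfc (q l) P
        = ((l : ℝ) + 1) ^ (2 * β - 1) • cfc (fun x : ℝ => (g x * x ^ l) ^ 2) P := by
      rw [hq_def]
      exact cfc_const_mul _ _ P ((hgc.mul (continuous_pow l)).pow 2).continuousOn
    rw [h1, cfc_pow (fun x : ℝ => g x * x ^ l) 2 P (hTc l).continuousOn hP, sq]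
  -- T l applied
  have hTapp : ∀ (l : ℕ) (v : H), T l v = (cfc g P) ((P ^ l) v) := by
    intro l v
    rw [hT_def]
    simp only
    rw [cfc_mul g (fun x : ℝ => x ^ l) P hgc.continuousOn (continuous_pow l).continuousOn,
      cfc_pow_id P l hP, ContinuousLinearMap.mul_apply]
  -- symmetry
  have hsymT : ∀ l : ℕ, (T l : H →ₗ[ℂ] H).IsSymmetric := by
    intro l
    exact ContinuousLinearMap.isSelfAdjoint_iff_isSymmetric.mp (cfc_predicate _ P)
  -- energy identity
  have energy : ∀ N : ℕ,
      ∑ l ∈ Finset.range N, ((l : ℝ) + 1) ^ (2 * β - 1) * ‖T l f‖ ^ 2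
        = RCLike.re (inner (𝕜 := ℂ)
            ((cfc (fun x : ℝ => ∑ l ∈ Finset.range N, q l x) P) f) f) := by
    intro N
    rw [hdecomp N, ContinuousLinearMap.sum_apply, sum_inner, map_sum]
    apply Finset.sum_congr rfl
    intro l _
    rw [ContinuousLinearMap.smul_apply, ContinuousLinearMap.mul_apply]
    rw [RCLike.real_smul_eq_coe_smul (K := ℂ), inner_smul_real_left, RCLike.smul_re]
    congr 1
    have hsa := hsymT l (T l f) f
    simp only [ContinuousLinearMap.coe_coe] at hsa
    rw [hsa]
    exact (inner_self_eq_norm_sq (𝕜 := ℂ) (T l f)).symm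
  -- partial sum bound
  have hpartial : ∀ N : ℕ,
      ∑ l ∈ Finset.range N, ((l : ℝ) + 1) ^ (2 * β - 1) * ‖T l f‖ ^ 2 ≤ C₀ * D * ‖f‖ ^ 2 := by
    intro N
    rw [energy N]
    set S := cfc (fun x : ℝ => ∑ l ∈ Finset.range N, q l x) P with hS_def
    have hnormS : ‖S‖ ≤ C₀ * D := norm_cfc_le (by positivity) (hptwise N)
    calc RCLike.re (inner (𝕜 := ℂ) (S f) f) ≤ ‖(inner (𝕜 := ℂ) (S f) f : ℂ)‖ :=
          RCLike.re_le_norm _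
      _ ≤ ‖S f‖ * ‖f‖ := norm_inner_le_norm _ _
      _ ≤ (‖S‖ * ‖f‖) * ‖f‖ :=
          mul_le_mul_of_nonneg_right (S.le_opNorm f) (norm_nonneg f)
      _ ≤ ((C₀ * D) * ‖f‖) * ‖f‖ := by
          apply mul_le_mul_of_nonneg_right _ (norm_nonneg f)
          exact mul_le_mul_of_nonneg_right hnormS (norm_nonneg f)
      _ = C₀ * D * ‖f‖ ^ 2 := by ring
  -- final
  have hfun_eq : (fun l : ℕ =>
      ((l + 1 : ℝ)) ^ (2 * β - 1) * ‖(cfc g P) ((P ^ l) f)‖ ^ 2)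
      = fun l : ℕ => ((l : ℝ) + 1) ^ (2 * β - 1) * ‖T l f‖ ^ 2 := by
    funext l
    rw [hTapp l f]
  have hnn : ∀ l : ℕ, 0 ≤ ((l : ℝ) + 1) ^ (2 * β - 1) * ‖T l f‖ ^ 2 := fun l =>
    mul_nonneg (Real.rpow_nonneg (by positivity) _) (sq_nonneg _)
  constructor
  · rw [hfun_eq]
    exact summable_of_sum_range_le hnn hpartial
  · rw [hfun_eq]
    exact Real.tsum_le_of_sum_range_le hnn hpartial
end

section
/- Let Γ be a countable set with weight m and Markov operator P with kernel p as above, with P self-adjoint on ℓ²(Γ,m) (i.e. p symmetric) and ‖P‖_{ℓ¹→ℓ¹} ≤ 1. Let q ∈ (1,2] and let f ≥ 0 be in ℓ¹ ∩ ℓ^∞. Then ∑_{x∈Γ} m(x)·∑_{n≥0}(-(∂_n + Δ))[(P^n f(x))^q] ≤ ‖f‖_q^q, where Δ = I - P and ∂_n u_n = u_{n+1} - u_n, assuming each term -(∂_n+Δ)[(P^n f)^q](x) is nonnegative. (In particular, with J(x) = -∑_{n≥0}(∂_n+Δ)[(P^n f(x))^q], one has ∑_x J(x)m(x) ≤ ‖f‖_q^q.)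 -/
noncomputable def PopOp {Γ : Type*} (p : Γ → Γ → ℝ) (m : Γ → ℝ) (g : Γ → ℝ) (x : Γ) : ℝ :=
  ∑' y, p x y * g y * m y

section Aux

variable {Γ : Type*} [Countable Γ] {m : Γ → ℝ} {p : Γ → Γ → ℝ}
variable (hm : ∀ x, 0 < m x) (hp0 : ∀ x y, 0 ≤ p x y) (hsym : ∀ x y, p x y = p y x)
    (hmass : ∀ x, HasSum (fun y => p x y * m y) 1)

include hm hp0 hsym hmass

theorem ker_summable (g : Γ → ℝ) (C : ℝ) (hg0 : ∀ y, 0 ≤ g y) (hgC : ∀ y, g y ≤ C) (x : Γ) :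
    Summable fun y => p x y * g y * m y := by
  apply Summable.of_nonneg_of_le
    (fun y => mul_nonneg (mul_nonneg (hp0 x y) (hg0 y)) (hm y).le)
    (fun y => ?_) (((hmass x).summable).mul_left C)
  have h1 : p x y * g y * m y ≤ p x y * C * m y := by
    have := mul_le_mul_of_nonneg_left (hgC y) (hp0 x y)
    exact mul_le_mul_of_nonneg_right this (hm y).le
  linarith [h1]

theorem pop_nonneg (g : Γ → ℝ) (hg0 : ∀ y, 0 ≤ g y) (x : Γ) : 0 ≤ PopOp p m g x :=
  tsum_nonneg fun y => mul_nonneg (mul_nonneg (hp0 x y) (hg0 y)) (hm y).le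

theorem pop_le (g : Γ → ℝ) (C : ℝ) (hg0 : ∀ y, 0 ≤ g y) (hgC : ∀ y, g y ≤ C) (x : Γ) :
    PopOp p m g x ≤ C := by
  have h1 : PopOp p m g x ≤ ∑' y, C * (p x y * m y) := by
    apply Summable.tsum_le_tsum _ (ker_summable hm hp0 hsym hmass g C hg0 hgC x)
      (((hmass x).summable).mul_left C)
    intro y
    have := mul_le_mul_of_nonneg_left (hgC y) (hp0 x y)
    have := mul_le_mul_of_nonneg_right this (hm y).le
    nlinarith [this]
  calc PopOp p m g x ≤ ∑' y, C * (p x y * m y) := h1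
    _ = C * ∑' y, p x y * m y := tsum_mul_left
    _ = C := by rw [(hmass x).tsum_eq, mul_one]

/-- ℓ¹ preservation: `∑ (Pg) m = ∑ g m` for nonneg bounded summable `g`. -/
theorem l1_pres (g : Γ → ℝ) (C : ℝ) (hg0 : ∀ y, 0 ≤ g y) (hgC : ∀ y, g y ≤ C)
    (hsum : Summable fun x => g x * m x) :
    Summable (fun x => PopOp p m g x * m x) ∧
      (∑' x, PopOp p m g x * m x) = ∑' x, g x * m x := by
  set G : Γ × Γ → ℝ := fun z => p z.1 z.2 * g z.2 * m z.2 * m z.1 with hG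
  have hG0 : ∀ z, 0 ≤ G z := fun z =>
    mul_nonneg (mul_nonneg (mul_nonneg (hp0 z.1 z.2) (hg0 z.2)) (hm z.2).le) (hm z.1).le
  have hrow : ∀ x, Summable fun y => G (x, y) :=
    fun x => (ker_summable hm hp0 hsym hmass g C hg0 hgC x).mul_right (m x)
  have hrowsum : ∀ x, (∑' y, G (x, y)) = PopOp p m g x * m x := by
    intro x
    have he : (fun y => G (x, y)) = fun y => (p x y * g y * m y) * m x := rfl
    rw [he, tsum_mul_right]
    rfl
  have hcoleq : ∀ y, (fun x => G (x, y)) = fun x => (g y * m y) * (p y x * m x) := by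
    intro y; funext x; simp only [hG]; rw [hsym x y]; ring
  have hcol : ∀ y, Summable fun x => G (x, y) := by
    intro y; rw [hcoleq y]; exact ((hmass y).summable).mul_left _
  have hcolsum : ∀ y, (∑' x, G (x, y)) = g y * m y := by
    intro y; rw [hcoleq y, tsum_mul_left, (hmass y).tsum_eq, mul_one]
  have hGswap : Summable fun z : Γ × Γ => G (z.2, z.1) := by
    rw [summable_prod_of_nonneg (fun z => hG0 (z.2, z.1))]
    refine ⟨fun y => hcol y, ?_⟩
    apply Summable.congr hsum
    intro y; exact (hcolsum y).symm
  have hGsummable : Summable G := by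
    have := hGswap.prod_symm
    exact this.congr (fun z => rfl)
  have hfactor := (summable_prod_of_nonneg (f := G) (fun z => hG0 z)).mp hGsummable
  have hsumPop : Summable fun x => PopOp p m g x * m x := by
    apply Summable.congr hfactor.2
    intro x; exact hrowsum x
  refine ⟨hsumPop, ?_⟩
  have huncurry : Summable (Function.uncurry fun x y => G (x, y)) := hGsummable
  calc (∑' x, PopOp p m g x * m x) = ∑' x, ∑' y, G (x, y) := by
        exact tsum_congr fun x => (hrowsum x).symm
    _ = ∑' y, ∑' x, G (x, y) := (Summable.tsum_comm huncurry).symm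
    _ = ∑' y, g y * m y := tsum_congr hcolsum

end Aux

theorem stmt18 {Γ : Type*} [Countable Γ] (m : Γ → ℝ) (hm : ∀ x, 0 < m x)
    (p : Γ → Γ → ℝ) (hp0 : ∀ x y, 0 ≤ p x y) (hsym : ∀ x y, p x y = p y x)
    (hmass : ∀ x, HasSum (fun y => p x y * m y) 1)
    (q : ℝ) (hq : 1 < q) (hq2 : q ≤ 2)
    (f : Γ → ℝ) (hf0 : ∀ x, 0 ≤ f x) (hf1 : Summable (fun x => f x * m x))
    (B : ℝ) (hfB : ∀ x, f x ≤ B)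
    (hterm_nonneg : ∀ (x : Γ) (n : ℕ),
      0 ≤ PopOp p m (fun y => ((PopOp p m)^[n] f y) ^ q) x - ((PopOp p m)^[n + 1] f x) ^ q) :
    (∑' x : Γ, m x * ∑' n : ℕ,
      (PopOp p m (fun y => ((PopOp p m)^[n] f y) ^ q) x - ((PopOp p m)^[n + 1] f x) ^ q)) ≤
      ∑' x : Γ, (f x) ^ q * m x := by
  classical
  set g : ℕ → Γ → ℝ := fun n x =>
    PopOp p m (fun y => ((PopOp p m)^[n] f y) ^ q) x - ((PopOp p m)^[n + 1] f x) ^ q with hgdef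
  set B' : ℝ := max B 0 with hB'
  have hB'0 : 0 ≤ B' := le_max_right _ _
  have hfB' : ∀ x, f x ≤ B' := fun x => le_trans (hfB x) (le_max_left _ _)
  have hq0 : 0 < q := lt_trans one_pos hq
  -- bounds on iterates
  have iter_bounds : ∀ n, ∀ x, 0 ≤ (PopOp p m)^[n] f x ∧ (PopOp p m)^[n] f x ≤ B' := by
    intro n
    induction n with
    | zero => intro x; simpa using ⟨hf0 x, hfB' x⟩
    | succ n ih =>
      intro x
      rw [Function.iterate_succ_apply']
      exact ⟨pop_nonneg hm hp0 hsym hmass _ (fun y => (ih y).1) x,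
        pop_le hm hp0 hsym hmass _ B' (fun y => (ih y).1) (fun y => (ih y).2) x⟩
  -- ℓ¹ summability of iterates
  have iter_summable : ∀ n, Summable (fun x => (PopOp p m)^[n] f x * m x) := by
    intro n
    induction n with
    | zero => simpa using hf1
    | succ n ih =>
      have h := (l1_pres hm hp0 hsym hmass _ B' (fun x => (iter_bounds n x).1)
        (fun x => (iter_bounds n x).2) ih).1
      apply Summable.congr h
      intro x
      rw [Function.iterate_succ_apply']
  -- facts about u n x = (P^n f x)^q
  have u0 : ∀ n x, 0 ≤ ((PopOp p m)^[n] f x) ^ q :=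
    fun n x => Real.rpow_nonneg (iter_bounds n x).1 q
  have uB : ∀ n x, ((PopOp p m)^[n] f x) ^ q ≤ B' ^ q :=
    fun n x => Real.rpow_le_rpow (iter_bounds n x).1 (iter_bounds n x).2 hq0.le
  have usummable : ∀ n, Summable (fun x => ((PopOp p m)^[n] f x) ^ q * m x) := by
    intro n
    apply Summable.of_nonneg_of_le (fun x => mul_nonneg (u0 n x) (hm x).le) ?_
      ((iter_summable n).mul_left (B' ^ (q - 1)))
    intro x
    have key : ((PopOp p m)^[n] f x) ^ q ≤ B' ^ (q - 1) * (PopOp p m)^[n] f x := by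
      rcases eq_or_lt_of_le (iter_bounds n x).1 with h | h
      · rw [← h, Real.zero_rpow (ne_of_gt hq0), mul_zero]
      · have h2 : ((PopOp p m)^[n] f x) ^ q
          = ((PopOp p m)^[n] f x) ^ (q - 1) * (PopOp p m)^[n] f x := by
          have e1 : q = (q - 1) + 1 := by ring
          nth_rewrite 1 [e1]
          rw [Real.rpow_add h, Real.rpow_one]
        rw [h2]
        have h3 : ((PopOp p m)^[n] f x) ^ (q - 1) ≤ B' ^ (q - 1) :=
          Real.rpow_le_rpow h.le (iter_bounds n x).2 (by linarith)
        exact mul_le_mul_of_nonneg_right h3 (iter_bounds n x).1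
    calc ((PopOp p m)^[n] f x) ^ q * m x
        ≤ (B' ^ (q - 1) * (PopOp p m)^[n] f x) * m x :=
          mul_le_mul_of_nonneg_right key (hm x).le
      _ = B' ^ (q - 1) * ((PopOp p m)^[n] f x * m x) := by ring
  set S : ℕ → ℝ := fun n => ∑' x, ((PopOp p m)^[n] f x) ^ q * m x with hSdef
  have hSnn : ∀ n, 0 ≤ S n :=
    fun n => tsum_nonneg fun x => mul_nonneg (u0 n x) (hm x).le
  -- Pop of u n
  have popu : ∀ n, Summable (fun x => PopOp p m (fun y => ((PopOp p m)^[n] f y) ^ q) x * m x) ∧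
      (∑' x, PopOp p m (fun y => ((PopOp p m)^[n] f y) ^ q) x * m x) = S n :=
    fun n => l1_pres hm hp0 hsym hmass _ (B' ^ q) (u0 n) (uB n) (usummable n)
  -- g summability in x for fixed n, and its tsum
  have gsum : ∀ n, Summable fun x => g n x * m x := by
    intro n
    apply Summable.congr (((popu n).1).sub (usummable (n + 1)))
    intro x
    simp only [hgdef]
    ring
  have tsum_g : ∀ n, (∑' x, g n x * m x) = S n - S (n + 1) := by
    intro n
    have h1 : (∑' x, g n x * m x)
        = (∑' x, (PopOp p m (fun y => ((PopOp p m)^[n] f y) ^ q) x * m x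
            - ((PopOp p m)^[n + 1] f x) ^ q * m x)) := by
      apply tsum_congr; intro x; simp only [hgdef]; ring
    rw [h1, Summable.tsum_sub (popu n).1 (usummable (n + 1)), (popu n).2]
  have g0 : ∀ n x, 0 ≤ g n x := fun n x => hterm_nonneg x n
  -- core finite bound
  have core : ∀ (s : Finset Γ) (N : ℕ),
      (∑ n ∈ Finset.range N, ∑ x ∈ s, m x * g n x) ≤ S 0 := by
    intro s N
    have h1 : ∀ n, (∑ x ∈ s, m x * g n x) ≤ S n - S (n + 1) := by
      intro n
      have h2 : (∑ x ∈ s, m x * g n x) = ∑ x ∈ s, g n x * m x := by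
        apply Finset.sum_congr rfl; intro x _; ring
      rw [h2, ← tsum_g n]
      exact Summable.sum_le_tsum s (fun x _ => mul_nonneg (g0 n x) (hm x).le) (gsum n)
    calc (∑ n ∈ Finset.range N, ∑ x ∈ s, m x * g n x)
        ≤ ∑ n ∈ Finset.range N, (S n - S (n + 1)) :=
          Finset.sum_le_sum fun n _ => h1 n
      _ = S 0 - S N := Finset.sum_range_sub' S N
      _ ≤ S 0 := by linarith [hSnn N]
  -- per-x summability in n
  have gx_summable : ∀ x, Summable fun n => g n x := by
    intro x
    apply summable_of_sum_range_le (c := S 0 / m x) (fun n => g0 n x)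
    intro N
    have h1 := core {x} N
    simp only [Finset.sum_singleton] at h1
    rw [← Finset.mul_sum] at h1
    rw [le_div_iff₀ (hm x)]
    linarith [h1]
  -- outer finite bound
  have outer : ∀ s : Finset Γ, (∑ x ∈ s, m x * ∑' n, g n x) ≤ S 0 := by
    intro s
    have h1 : (∑ x ∈ s, m x * ∑' n, g n x) = ∑' n, ∑ x ∈ s, m x * g n x := by
      rw [Summable.tsum_finsetSum (fun x _ => (gx_summable x).mul_left (m x))]
      apply Finset.sum_congr rfl
      intro x _
      exact (tsum_mul_left).symm
    rw [h1]
    apply Summable.tsum_le_of_sum_le (summable_sum (fun x _ => (gx_summable x).mul_left (m x)))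
    intro t
    obtain ⟨N, hN⟩ := t.exists_nat_subset_range
    calc (∑ n ∈ t, ∑ x ∈ s, m x * g n x)
        ≤ ∑ n ∈ Finset.range N, ∑ x ∈ s, m x * g n x := by
          apply Finset.sum_le_sum_of_subset_of_nonneg hN
          intro n _ _
          exact Finset.sum_nonneg fun x _ => mul_nonneg (hm x).le (g0 n x)
      _ ≤ S 0 := core s N
  -- conclude
  have hS0 : S 0 = ∑' x, (f x) ^ q * m x := by
    simp only [hSdef, Function.iterate_zero, id_eq]
  rw [← hS0]
  by_cases hF : Summable fun x => m x * ∑' n, g n x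
  · exact Summable.tsum_le_of_sum_le hF outer
  · rw [tsum_eq_zero_of_not_summable hF]
    exact hSnn 0
end
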